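/- Let D be an acyclic orientation of the whole graph G (a choice 𝔼(D) ⊆ 𝔼 of exactly one orientation of each edge, containing no oriented cycle). Then the set F_D := ∩_{β ∈ 𝒰_D} F_β consists of a single point ν^D, this point ν^D is a vertex (0-dimensional face) of the Voronoi cell Vor_F(O), and it satisfies φ(ν^D) = D, i.e., 𝔼(D) = ∪ of supp⁺(β) over all bond elements β with {ν^D} ⊆ F_β. Moreover, every vertex of Vor_F(O) is of the form ν^D for some acyclic orientation D of G. -/

import Mathlib

open Finset
open scoped Classical

structure Multigraph (V E : Type) where
  tail : E → V
  head : E → V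
  loopless : ∀ e, tail e ≠ head e

namespace Multigraph

variable {V E : Type}

/-- The simple graph of adjacency underlying a multigraph. -/
def adjG (G : Multigraph V E) : SimpleGraph V :=
  SimpleGraph.fromRel (fun u v => ∃ e, G.tail e = u ∧ G.head e = v)

/-- A multigraph is connected if its adjacency graph is. -/
def Conn (G : Multigraph V E) : Prop := G.adjG.Connected

/-- Tail of an oriented edge `(e, b)`. -/
def otail (G : Multigraph V E) (oe : E × Bool) : V :=
  if oe.2 then G.tail oe.1 else G.head oe.1

/-- Head of an oriented edge `(e, b)`. -/
def ohead (G : Multigraph V E) (oe : E × Bool) : V :=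
  if oe.2 then G.head oe.1 else G.tail oe.1

/-- The coboundary map `d : C⁰(G,A) → C¹(G,A)`, where `C¹(G,A)` is identified with
`E → A` via a fixed reference orientation of each edge. -/
def dm (G : Multigraph V E) {A : Type} [Ring A] (f : V → A) : E → A :=
  fun e => f (G.head e) - f (G.tail e)

end Multigraph

/-- Value of an element of `C¹(G,A)` on an oriented edge. -/
def oval {E A : Type} [Neg A] (g : E → A) (oe : E × Bool) : A :=
  if oe.2 then g oe.1 else -g oe.1

variable {V E : Type} [Fintype V] [Fintype E] [DecidableEq V] [DecidableEq E]

/-- The cut space `F_ℝ = d(C⁰(G,ℝ)) ⊆ C¹(G,ℝ)`. -/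
def FR (G : Multigraph V E) : Set (E → ℝ) := Set.range (G.dm (A := ℝ))

/-- The cut lattice `F_ℤ`, viewed inside `C¹(G,ℝ)`. -/
def FZr (G : Multigraph V E) : Set (E → ℝ) :=
  {g | ∃ f : V → ℤ, g = G.dm fun v => (f v : ℝ)}

/-- The Euclidean norm on `C¹(G,ℝ)`. -/
noncomputable def enorm (x : E → ℝ) : ℝ := Real.sqrt (∑ e, x e ^ 2)

/-- The Voronoi cell of `β ∈ F_ℤ` inside `F_ℝ`. -/
noncomputable def VorF (G : Multigraph V E) (β : E → ℝ) : Set (E → ℝ) :=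
  {x | x ∈ FR G ∧ ∀ α ∈ FZr G, _root_.enorm (x - β) ≤ _root_.enorm (x - α)}

/-- The number of connected components of the induced subgraph `G[C]`. -/
noncomputable def ncomp (G : Multigraph V E) (C : Set V) : ℕ :=
  Nat.card (G.adjG.induce C).ConnectedComponent

/-- `β` is a bond element of `F_ℤ` (viewed in `C¹(G,ℝ)`): `β = d(χ_C)` for `C ⊆ V`
such that the ordered partition `(V − C, C)` is a bond. -/
def IsBondElt (G : Multigraph V E) (β : E → ℝ) : Prop :=
  ∃ C : Set V, C.Nonempty ∧ Cᶜ.Nonempty ∧ ncomp G Cᶜ + ncomp G C - 1 = 1 ∧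
    β = G.dm fun v => if v ∈ C then (1 : ℝ) else 0

/-- The positive support of `x ∈ C¹(G,ℝ)`. -/
def suppPos (x : E → ℝ) : Set (E × Bool) := {oe | 0 < oval x oe}

/-- `D` is an acyclic orientation of the whole graph `G`: exactly one orientation of
each edge is chosen, and there is no oriented cycle. -/
def IsAcyclicOrientation (G : Multigraph V E) (D : Set (E × Bool)) : Prop :=
  (∀ e : E, ((e, true) ∈ D ↔ (e, false) ∉ D)) ∧
  ¬ ∃ (l : ℕ) (vs : Fin l → V) (es : Fin l → E × Bool), 0 < l ∧
      Function.Injective vs ∧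
      ∀ i : Fin l, es i ∈ D ∧ G.otail (es i) = vs i ∧
        G.ohead (es i) = vs ⟨((i : ℕ) + 1) % l, Nat.mod_lt _ i.pos⟩

/-- The affine hyperplane `F_β = {x ∈ F_ℝ | 2⟨x, β⟩ = ‖β‖²}` associated with a bond
element `β`. -/
def Fhyp (G : Multigraph V E) (β : E → ℝ) : Set (E → ℝ) :=
  {x | x ∈ FR G ∧ 2 * (∑ e : E, x e * β e) = ∑ e : E, β e ^ 2}

/-- `F_D = ⋂_{β ∈ 𝒰_D} F_β`, intersection over the bond elements `β` with
`supp⁺(β) ⊆ 𝔼(D)`. -/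
def FD (G : Multigraph V E) (D : Set (E × Bool)) : Set (E → ℝ) :=
  {x | x ∈ FR G ∧ ∀ β : E → ℝ, IsBondElt G β → suppPos β ⊆ D → x ∈ Fhyp G β}


set_option linter.unusedSectionVars false
set_option linter.unusedVariables false
set_option maxHeartbeats 1000000

section Chunk1

variable {V E : Type} [Fintype V] [Fintype E] [DecidableEq V] [DecidableEq E]

namespace S17

/-- inner product -/
noncomputable def ip (x y : E → ℝ) : ℝ := ∑ e, x e * y e

lemma ip_comm (x y : E → ℝ) : ip x y = ip y x := by
  unfold ip; exact Finset.sum_congr rfl fun e _ => mul_comm _ _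

lemma ip_add_right (x y z : E → ℝ) : ip x (y + z) = ip x y + ip x z := by
  unfold ip; rw [← Finset.sum_add_distrib]; exact Finset.sum_congr rfl fun e _ => by
    simp [mul_add]

lemma ip_sub_left (x y z : E → ℝ) : ip (x - y) z = ip x z - ip y z := by
  unfold ip; rw [← Finset.sum_sub_distrib]; exact Finset.sum_congr rfl fun e _ => by
    simp [sub_mul]

lemma ip_smul_left (c : ℝ) (x y : E → ℝ) : ip (c • x) y = c * ip x y := by
  unfold ip; rw [Finset.mul_sum]; exact Finset.sum_congr rfl fun e _ => by
    simp [mul_assoc]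

lemma ip_self_nonneg (x : E → ℝ) : 0 ≤ ip x x :=
  Finset.sum_nonneg fun e _ => mul_self_nonneg _

lemma eq_zero_of_ip_self (x : E → ℝ) (h : ip x x = 0) : x = 0 := by
  funext e
  have := (Finset.sum_eq_zero_iff_of_nonneg (fun e _ => mul_self_nonneg (x e))).1 h e
    (Finset.mem_univ e)
  have := mul_self_eq_zero.mp this
  simpa using this

lemma ip_eq_sum_sq (x : E → ℝ) : ip x x = ∑ e, x e ^ 2 := by
  unfold ip; exact Finset.sum_congr rfl fun e _ => (sq (x e)).symm

variable (G : Multigraph V E)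

lemma dm_add {A : Type} [Ring A] (f g : V → A) : G.dm (f + g) = G.dm f + G.dm g := by
  funext e; simp only [Multigraph.dm, Pi.add_apply]; abel

lemma dm_sub {A : Type} [Ring A] (f g : V → A) : G.dm (f - g) = G.dm f - G.dm g := by
  funext e; simp only [Multigraph.dm, Pi.sub_apply]; abel

lemma dm_smul (c : ℝ) (f : V → ℝ) : G.dm (c • f) = c • G.dm f := by
  funext e; simp only [Multigraph.dm, Pi.smul_apply, smul_eq_mul]; ring

lemma dm_const {A : Type} [Ring A] (c : A) : G.dm (fun _ => c) = 0 := by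
  funext e; simp [Multigraph.dm]

/-- the cut space as a submodule -/
noncomputable def dmL : (V → ℝ) →ₗ[ℝ] (E → ℝ) where
  toFun := G.dm
  map_add' := dm_add G
  map_smul' := dm_smul G

noncomputable def FRsub : Submodule ℝ (E → ℝ) := LinearMap.range (dmL G)

lemma FR_eq : FR G = (FRsub G : Set (E → ℝ)) := rfl

/-- characteristic function -/
noncomputable def cχ (A : Set V) : V → ℝ := fun v => if v ∈ A then 1 else 0

/-- bond-type vector of a subset -/
noncomputable def bv (A : Set V) : E → ℝ := G.dm (cχ A)

lemma bv_mem_FR (A : Set V) : bv G A ∈ FR G := ⟨cχ A, rfl⟩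

lemma bv_mem_FZr (A : Set V) : bv G A ∈ FZr G := by
  refine ⟨fun v => if v ∈ A then 1 else 0, ?_⟩
  funext e
  simp only [bv, Multigraph.dm, cχ]
  split_ifs <;> norm_num

lemma bv_vals (A : Set V) (e : E) :
    bv G A e = 0 ∨ bv G A e = 1 ∨ bv G A e = -1 := by
  simp only [bv, Multigraph.dm, cχ]; split_ifs <;> norm_num

lemma bv_sq_eq_abs (A : Set V) (e : E) : (bv G A e) ^ 2 = |bv G A e| := by
  rcases bv_vals G A e with h | h | h <;> rw [h] <;> norm_num

lemma bv_eq_one_iff (A : Set V) (e : E) :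
    bv G A e = 1 ↔ (G.head e ∈ A ∧ G.tail e ∉ A) := by
  simp only [bv, Multigraph.dm, cχ]; split_ifs with h1 h2 h2 <;> norm_num <;> tauto

lemma bv_eq_negone_iff (A : Set V) (e : E) :
    bv G A e = -1 ↔ (G.head e ∉ A ∧ G.tail e ∈ A) := by
  simp only [bv, Multigraph.dm, cχ]; split_ifs with h1 h2 h2 <;> norm_num <;> tauto

lemma bv_ne_zero (A : Set V) (e : E) (h : bv G A e ≠ 0) :
    (G.head e ∈ A ∧ G.tail e ∉ A) ∨ (G.head e ∉ A ∧ G.tail e ∈ A) := by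
  rcases bv_vals G A e with h0 | h1 | h1
  · exact absurd h0 h
  · exact Or.inl ((bv_eq_one_iff G A e).1 h1)
  · exact Or.inr ((bv_eq_negone_iff G A e).1 h1)

lemma bv_compl (A : Set V) : bv G Aᶜ = -bv G A := by
  funext e; simp [bv, Multigraph.dm, cχ]
  split_ifs <;> simp_all <;> ring

lemma bv_empty : bv G (∅ : Set V) = 0 := by
  funext e; simp [bv, Multigraph.dm, cχ]

lemma bv_univ : bv G (Set.univ : Set V) = 0 := by
  funext e; simp [bv, Multigraph.dm, cχ]

/-- oval of dm -/
lemma oval_dm {A : Type} [Ring A] (f : V → A) (oe : E × Bool) :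
    oval (G.dm f) oe = f (G.ohead oe) - f (G.otail oe) := by
  rcases oe with ⟨e, b⟩
  cases b <;> simp [oval, Multigraph.dm, Multigraph.ohead, Multigraph.otail]

/-- Vor membership characterization -/
lemma mem_Vor_iff (x : E → ℝ) :
    x ∈ VorF G 0 ↔ x ∈ FR G ∧ ∀ α ∈ FZr G, 2 * ip x α ≤ ip α α := by
  unfold VorF
  simp only [Set.mem_setOf_eq, sub_zero]
  constructor
  · rintro ⟨h1, h2⟩
    refine ⟨h1, fun α hα => ?_⟩
    have := h2 α hα
    unfold _root_.enorm at this
    have h3 : ∑ e, x e ^ 2 ≤ ∑ e, (x - α) e ^ 2 := by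
      have hn : (0:ℝ) ≤ ∑ e, x e ^ 2 := Finset.sum_nonneg fun e _ => sq_nonneg _
      nlinarith [Real.sq_sqrt hn, Real.sq_sqrt (Finset.sum_nonneg
        (fun e (_ : e ∈ Finset.univ) => sq_nonneg ((x - α) e))),
        Real.sqrt_nonneg (∑ e, x e ^ 2), Real.sqrt_nonneg (∑ e, (x - α) e ^ 2)]
    have expand : ∑ e, (x - α) e ^ 2 = ∑ e, x e ^ 2 - 2 * ip x α + ip α α := by
      have hb : ∀ e : E, (x - α) e ^ 2 = x e ^ 2 - 2 * (x e * α e) + α e * α e := fun e => by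
        simp only [Pi.sub_apply]; ring
      simp only [hb, Finset.sum_add_distrib, Finset.sum_sub_distrib, Finset.mul_sum, ip]
    linarith [h3, expand ▸ h3]
  · rintro ⟨h1, h2⟩
    refine ⟨h1, fun α hα => ?_⟩
    have := h2 α hα
    unfold _root_.enorm
    apply Real.sqrt_le_sqrt
    have expand : ∑ e, (x - α) e ^ 2 = ∑ e, x e ^ 2 - 2 * ip x α + ip α α := by
      have hb : ∀ e : E, (x - α) e ^ 2 = x e ^ 2 - 2 * (x e * α e) + α e * α e := fun e => by
        simp only [Pi.sub_apply]; ring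
      simp only [hb, Finset.sum_add_distrib, Finset.sum_sub_distrib, Finset.mul_sum, ip]
    linarith

lemma mem_Fhyp_iff (β x : E → ℝ) :
    x ∈ Fhyp G β ↔ x ∈ FR G ∧ 2 * ip x β = ip β β := by
  unfold Fhyp ip
  rw [show (∑ e : E, β e * β e) = ∑ e : E, β e ^ 2 from
    Finset.sum_congr rfl fun e _ => (sq (β e)).symm]
  rfl

end S17
end Chunk1
section Chunk2
variable {V E : Type} [Fintype V] [Fintype E] [DecidableEq V] [DecidableEq E]
namespace S17
variable (G : Multigraph V E)

/-- adjacency restricted to a set -/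
def rel (S : Set V) (a b : V) : Prop := G.adjG.Adj a b ∧ a ∈ S ∧ b ∈ S

lemma rel_symm (S : Set V) : Symmetric (rel G S) := fun a b ⟨h, ha, hb⟩ => ⟨h.symm, hb, ha⟩

lemma reach_symm {S : Set V} {a b : V} (h : Relation.ReflTransGen (rel G S) a b) :
    Relation.ReflTransGen (rel G S) b a :=
  letI : Std.Symm (rel G S) := ⟨rel_symm G S⟩; Std.Symm.symm _ _ h

lemma reach_mono {S T : Set V} (hST : S ⊆ T) {a b : V}
    (h : Relation.ReflTransGen (rel G S) a b) : Relation.ReflTransGen (rel G T) a b :=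
  Relation.ReflTransGen.mono (fun _ _ ⟨hadj, h1, h2⟩ => ⟨hadj, hST h1, hST h2⟩) _ _ h

/-- connected component of `x` inside `S` -/
def cset (S : Set V) (x : V) : Set V := {y | Relation.ReflTransGen (rel G S) x y ∧ y ∈ S}

lemma cset_subset (S : Set V) (x : V) : cset G S x ⊆ S := fun _ h => h.2

lemma mem_cset_self {S : Set V} {x : V} (hx : x ∈ S) : x ∈ cset G S x :=
  ⟨Relation.ReflTransGen.refl, hx⟩

lemma cset_closed {S : Set V} {x y z : V} (hy : y ∈ cset G S x)
    (hadj : G.adjG.Adj y z) (hz : z ∈ S) : z ∈ cset G S x :=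
  ⟨Relation.ReflTransGen.tail hy.1 ⟨hadj, hy.2, hz⟩, hz⟩

lemma cset_eq_of_mem {S : Set V} {x y : V} (hx : x ∈ S) (hy : y ∈ cset G S x) :
    cset G S y = cset G S x := by
  ext z
  exact ⟨fun hz => ⟨hy.1.trans hz.1, hz.2⟩,
    fun hz => ⟨(reach_symm G hy.1).trans hz.1, hz.2⟩⟩

lemma reach_restrict {S : Set V} {x y : V} (hx : x ∈ S)
    (h : Relation.ReflTransGen (rel G S) x y) :
    Relation.ReflTransGen (rel G (cset G S x)) x y := by
  induction h with
  | refl => exact Relation.ReflTransGen.refl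
  | tail hab hbc ih =>
      rename_i b c
      have hb : b ∈ cset G S x := ⟨hab, hbc.2.1⟩
      have hc : c ∈ cset G S x := ⟨hab.tail hbc, hbc.2.2⟩
      exact ih.tail ⟨hbc.1, hb, hc⟩

/-- connectivity of a cset within itself -/
lemma cset_conn {S : Set V} {x : V} (hx : x ∈ S) :
    ∀ y ∈ cset G S x, ∀ z ∈ cset G S x,
      Relation.ReflTransGen (rel G (cset G S x)) y z := by
  intro y hy z hz
  have h1 := reach_restrict G hx hy.1
  have h2 := reach_restrict G hx hz.1
  exact (letI : Std.Symm (rel G (cset G S x)) :=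
    ⟨fun a b hab => ⟨hab.1.symm, hab.2.2, hab.2.1⟩⟩; Std.Symm.symm _ _ h1).trans h2

lemma adj_of_edge (e : E) : G.adjG.Adj (G.tail e) (G.head e) := by
  refine ⟨G.loopless e, Or.inl ⟨e, rfl, rfl⟩⟩

/-- a nonempty set closed under adjacency is everything -/
lemma absorb (hG : G.Conn) {K : Set V} (hne : K.Nonempty)
    (hcl : ∀ y ∈ K, ∀ z, G.adjG.Adj y z → z ∈ K) : K = Set.univ := by
  obtain ⟨k, hk⟩ := hne
  have key : ∀ (a b : V) (w : G.adjG.Walk a b), a ∈ K → b ∈ K := by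
    intro a b w
    induction w with
    | nil => exact id
    | cons hadj p ih => exact fun ha => ih (hcl _ ha _ hadj)
  ext v
  simp only [Set.mem_univ, iff_true]
  obtain ⟨w⟩ := hG.preconnected k v
  exact key k v w hk

/-- bridge to ncomp -/
lemma ncomp_eq_one {S : Set V} (hne : S.Nonempty)
    (hconn : ∀ x ∈ S, ∀ y ∈ S, Relation.ReflTransGen (rel G S) x y) :
    ncomp G S = 1 := by
  unfold ncomp
  rw [Nat.card_eq_one_iff_unique]
  constructor
  · constructor
    intro a b
    obtain ⟨⟨u, hu⟩, rfl⟩ := a.exists_rep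
    obtain ⟨⟨w, hw⟩, rfl⟩ := b.exists_rep
    apply SimpleGraph.ConnectedComponent.sound
    have h := hconn u hu w hw
    -- convert ReflTransGen to Reachable in induce
    have : ∀ {y : V} (hy : y ∈ S), Relation.ReflTransGen (rel G S) u y →
        (G.adjG.induce S).Reachable ⟨u, hu⟩ ⟨y, hy⟩ := by
      intro y hy hr
      induction hr with
      | refl => rfl
      | tail hab hbc ih =>
          rename_i b c
          refine (ih hbc.2.1).trans ?_
          exact SimpleGraph.Adj.reachable (by simpa using hbc.1)
    exact this hw h
  · exact ⟨SimpleGraph.connectedComponentMk _ ⟨hne.choose, hne.choose_spec⟩⟩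

end S17
end Chunk2
section Chunk3
variable {V E : Type} [Fintype V] [Fintype E] [DecidableEq V] [DecidableEq E]
namespace S17
variable (G : Multigraph V E)

/-- the components of `G[S]` -/
noncomputable def comps (S : Set V) : Finset (Set V) :=
  Finset.image (fun x => cset G S x) (Finset.univ.filter (fun x => x ∈ S))

lemma mem_comps {S K : Set V} :
    K ∈ comps G S ↔ ∃ x, x ∈ S ∧ K = cset G S x := by
  simp [comps, eq_comm]

lemma comps_subset {S K : Set V} (hK : K ∈ comps G S) : K ⊆ S := by
  obtain ⟨x, _, rfl⟩ := (mem_comps G).1 hK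
  exact cset_subset G S x

lemma comps_nonempty {S K : Set V} (hK : K ∈ comps G S) : K.Nonempty := by
  obtain ⟨x, hx, rfl⟩ := (mem_comps G).1 hK
  exact ⟨x, mem_cset_self G hx⟩

/-- membership in a unique component -/
lemma cset_mem_comps {S : Set V} {x : V} (hx : x ∈ S) : cset G S x ∈ comps G S :=
  (mem_comps G).2 ⟨x, hx, rfl⟩

lemma eq_cset_of_mem_comps {S K : Set V} (hK : K ∈ comps G S) {y : V} (hy : y ∈ K) :
    K = cset G S y := by
  obtain ⟨x, hx, rfl⟩ := (mem_comps G).1 hK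
  exact (cset_eq_of_mem G hx hy).symm

lemma comps_closed {S K : Set V} (hK : K ∈ comps G S) {y z : V} (hy : y ∈ K)
    (hadj : G.adjG.Adj y z) (hz : z ∈ S) : z ∈ K := by
  obtain ⟨x, hx, rfl⟩ := (mem_comps G).1 hK
  exact cset_closed G hy hadj hz

lemma sum_comps_cχ (S : Set V) : cχ S = ∑ K ∈ comps G S, cχ K := by
  funext v
  rw [Finset.sum_apply]
  by_cases hv : v ∈ S
  · rw [Finset.sum_eq_single (cset G S v)]
    · simp [cχ, hv, mem_cset_self G hv]
    · intro K hK hne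
      have : v ∉ K := fun hvK => hne ((eq_cset_of_mem_comps G hK hvK))
      simp [cχ, this]
    · intro h
      exact absurd (cset_mem_comps G hv) h
  · rw [Finset.sum_eq_zero (fun K hK => by
      have : v ∉ K := fun hvK => hv (comps_subset G hK hvK)
      simp [cχ, this])]
    simp [cχ, hv]

lemma bv_sum_comps (S : Set V) : bv G S = ∑ K ∈ comps G S, bv G K := by
  unfold bv
  rw [sum_comps_cχ G S]
  exact map_sum (dmL G) _ _

/-- stage 1: value preservation for components of A -/
lemma stage1_cross {A K : Set V} (hK : K ∈ comps G A) (e : E)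
    (h : bv G K e ≠ 0) : bv G K e = bv G A e := by
  have hadj := adj_of_edge G e
  rcases bv_ne_zero G K e h with ⟨h1, h2⟩ | ⟨h1, h2⟩
  · -- head ∈ K, tail ∉ K; claim tail ∉ A
    have ht : G.tail e ∉ A := fun hta => h2 (comps_closed G hK h1 hadj.symm hta)
    rw [(bv_eq_one_iff G K e).2 ⟨h1, h2⟩, ((bv_eq_one_iff G A e).2
      ⟨comps_subset G hK h1, ht⟩).symm]
  · have hh : G.head e ∉ A := fun hha => h1 (comps_closed G hK h2 hadj hha)
    rw [(bv_eq_negone_iff G K e).2 ⟨h1, h2⟩, ((bv_eq_negone_iff G A e).2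
      ⟨hh, comps_subset G hK h2⟩).symm]

/-- stage 2 components: the complement endpoint of a crossing edge of `K` lies in `A`. -/
lemma stage2_crossA {A K : Set V} (hK : K ∈ comps G Aᶜ) {y z : V} (hy : y ∈ K)
    (hadj : G.adjG.Adj y z) (hz : z ∉ K) : z ∈ A := by
  by_contra hzA
  exact hz (comps_closed G hK hy hadj hzA)

lemma stage2_cross {A K : Set V} (hK : K ∈ comps G Aᶜ) (e : E)
    (h : bv G Kᶜ e ≠ 0) : bv G Kᶜ e = bv G A e := by
  have hadj := adj_of_edge G e
  have hc : bv G Kᶜ = - bv G K := bv_compl G K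
  have h' : bv G K e ≠ 0 := by
    intro h0; rw [hc] at h; simp [h0] at h
  rw [hc, Pi.neg_apply]
  rcases bv_ne_zero G K e h' with ⟨h1, h2⟩ | ⟨h1, h2⟩
  · -- head ∈ K, tail ∉ K ⇒ tail ∈ A
    have ht : G.tail e ∈ A := stage2_crossA G hK h1 hadj.symm h2
    have hh : G.head e ∉ A := fun hha => (comps_subset G hK h1) hha
    rw [(bv_eq_one_iff G K e).2 ⟨h1, h2⟩, ((bv_eq_negone_iff G A e).2 ⟨hh, ht⟩)]
  · have hh : G.head e ∈ A := stage2_crossA G hK h2 hadj h1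
    have ht : G.tail e ∉ A := fun hta => (comps_subset G hK h2) hta
    rw [(bv_eq_negone_iff G K e).2 ⟨h1, h2⟩, ((bv_eq_one_iff G A e).2 ⟨hh, ht⟩)]
    norm_num

/-- stage 2: `Kᶜ` is connected, for `K` a component of `Aᶜ`, `A` connected. -/
lemma stage2_conn (hG : G.Conn) {A : Set V} (hA : A.Nonempty)
    (hconn : ∀ y ∈ A, ∀ z ∈ A, Relation.ReflTransGen (rel G A) y z)
    {K : Set V} (hK : K ∈ comps G Aᶜ) :
    ∀ v ∈ Kᶜ, ∀ w ∈ Kᶜ, Relation.ReflTransGen (rel G Kᶜ) v w := by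
  have hAK : A ⊆ Kᶜ := fun a ha hak => (comps_subset G hK hak) ha
  -- every v ∈ Kᶜ reaches some element of A within Kᶜ
  have key : ∀ v ∈ Kᶜ, ∃ a ∈ A, Relation.ReflTransGen (rel G Kᶜ) v a := by
    intro v hv
    by_cases hvA : v ∈ A
    · exact ⟨v, hvA, Relation.ReflTransGen.refl⟩
    · have hvAc : v ∈ Aᶜ := hvA
      set K' := cset G Aᶜ v with hK'
      have hK'K : K' ⊆ Kᶜ := by
        intro y hy hyK
        have h1 : K = cset G Aᶜ y := eq_cset_of_mem_comps G hK hyK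
        have h2 : cset G Aᶜ y = K' := cset_eq_of_mem G hvAc hy
        rw [h1, h2] at hv
        exact hv (mem_cset_self G hvAc)
      -- there is an edge from K' to A
      have hedge : ∃ y ∈ K', ∃ z ∈ A, G.adjG.Adj y z := by
        by_contra hcon
        push_neg at hcon
        have hcl : ∀ y ∈ K', ∀ z, G.adjG.Adj y z → z ∈ K' := by
          intro y hy z hadj
          by_cases hzA : z ∈ A
          · exact absurd hadj (hcon y hy z hzA)
          · exact cset_closed G hy hadj hzA
        have huniv := absorb G hG ⟨v, mem_cset_self G hvAc⟩ hcl
        obtain ⟨a, ha⟩ := hA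
        have haK' : a ∈ K' := by rw [hK', huniv]; trivial
        exact (cset_subset G Aᶜ v haK') ha
      obtain ⟨y, hy, z, hz, hadj⟩ := hedge
      refine ⟨z, hz, ?_⟩
      have hpath : Relation.ReflTransGen (rel G K') v y := reach_restrict G hvAc hy.1
      have : Relation.ReflTransGen (rel G Kᶜ) v y := reach_mono G hK'K hpath
      exact this.tail ⟨hadj, hK'K hy, hAK hz⟩
  intro v hv w hw
  obtain ⟨a, ha, hva⟩ := key v hv
  obtain ⟨b, hb, hwb⟩ := key w hw
  have hab : Relation.ReflTransGen (rel G Kᶜ) a b :=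
    reach_mono G hAK (hconn a ha b hb)
  exact (hva.trans hab).trans (reach_symm G hwb)

/-- stage 2 bond element -/
lemma stage2_bond (hG : G.Conn) {A : Set V} (hA : A.Nonempty)
    (hconn : ∀ y ∈ A, ∀ z ∈ A, Relation.ReflTransGen (rel G A) y z)
    {K : Set V} (hK : K ∈ comps G Aᶜ) : IsBondElt G (bv G Kᶜ) := by
  refine ⟨Kᶜ, ?_, ?_, ?_, rfl⟩
  · obtain ⟨a, ha⟩ := hA
    exact ⟨a, fun hak => (comps_subset G hK hak) ha⟩
  · rw [compl_compl]
    exact comps_nonempty G hK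
  · rw [compl_compl]
    have h1 : ncomp G K = 1 := by
      obtain ⟨x, hx, rfl⟩ := (mem_comps G).1 hK
      exact ncomp_eq_one G ⟨x, mem_cset_self G hx⟩ (cset_conn G hx)
    have h2 : ncomp G Kᶜ = 1 := by
      refine ncomp_eq_one G ?_ (stage2_conn G hG hA hconn hK)
      obtain ⟨a, ha⟩ := hA
      exact ⟨a, fun hak => (comps_subset G hK hak) ha⟩
    rw [h1, h2]

/-- the full decomposition L2a -/
lemma L2a (hG : G.Conn) (A : Set V) (hA : A.Nonempty) (hAc : Aᶜ.Nonempty) :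
    ∃ P : Finset (Set V × Set V),
      (∀ p ∈ P, IsBondElt G (bv G p.2)) ∧
      bv G A = ∑ p ∈ P, bv G p.2 ∧
      (∀ p ∈ P, ∀ e, bv G p.2 e ≠ 0 → bv G p.2 e = bv G A e) := by
  classical
  refine ⟨(comps G A).biUnion (fun K1 => (comps G K1ᶜ).image (fun K => (K1, Kᶜ))), ?_, ?_, ?_⟩
  · rintro ⟨K1, C⟩ hp
    simp only [Finset.mem_biUnion, Finset.mem_image, Prod.mk.injEq] at hp
    obtain ⟨K1', hK1', K, hK, h1, h2⟩ := hp
    subst h1; subst h2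
    have hK1A := comps_subset G hK1'
    have hK1ne := comps_nonempty G hK1'
    obtain ⟨x, hx, hcs⟩ := (mem_comps G).1 hK1'
    exact stage2_bond G hG hK1ne (by rw [hcs]; exact cset_conn G hx) hK
  · rw [bv_sum_comps G A, Finset.sum_biUnion]
    · refine Finset.sum_congr rfl fun K1 hK1 => ?_
      rw [Finset.sum_image (by intro a _ b _ h; simpa using congrArg Prod.snd h)]
      have hK1ne := comps_nonempty G hK1
      obtain ⟨x, hx, hcs⟩ := (mem_comps G).1 hK1
      have hc : ∀ y ∈ K1, ∀ z ∈ K1, Relation.ReflTransGen (rel G K1) y z := by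
        rw [hcs]; exact cset_conn G hx
      have hK1c : (K1)ᶜ.Nonempty := by
        obtain ⟨a, ha⟩ := hAc
        exact ⟨a, fun hak => ha (comps_subset G hK1 hak)⟩
      -- bv K1 = ∑ K ∈ comps K1ᶜ, bv Kᶜ
      have hbb : bv G K1 = - bv G (K1ᶜ) := by rw [bv_compl]; simp
      rw [hbb, bv_sum_comps G (K1ᶜ), ← Finset.sum_neg_distrib]
      exact Finset.sum_congr rfl fun K hK => (bv_compl G K).symm
    · intro a ha b hb hab
      simp only [Finset.disjoint_left, Finset.mem_image]
      rintro p ⟨K, hK, rfl⟩ ⟨K', hK', hpe⟩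
      exact hab (by simpa using (congrArg Prod.fst hpe).symm)
  · rintro ⟨K1, C⟩ hp e hne
    simp only [Finset.mem_biUnion, Finset.mem_image, Prod.mk.injEq] at hp
    obtain ⟨K1', hK1', K, hK, h1, h2⟩ := hp
    have hne' : bv G Kᶜ e ≠ 0 := by rw [h2]; exact hne
    have h3 : bv G Kᶜ e = bv G K1' e := stage2_cross G hK e hne'
    have : bv G C e = bv G A e := by
      rw [← h2, h3]
      exact stage1_cross G hK1' e (by rw [← h3]; exact hne')
    exact this

end S17
end Chunk3
section Chunk4
variable {V E : Type} [Fintype V] [Fintype E] [DecidableEq V] [DecidableEq E]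
namespace S17
variable (G : Multigraph V E)

lemma ip_sum_right {ι : Type} (x : E → ℝ) (s : Finset ι) (f : ι → E → ℝ) :
    ip x (∑ i ∈ s, f i) = ∑ i ∈ s, ip x (f i) := by
  unfold ip
  rw [Finset.sum_comm]
  exact Finset.sum_congr rfl fun e _ => by rw [Finset.sum_apply, Finset.mul_sum]

/-- bound for a single subset from the bond decomposition -/
lemma KB (hG : G.Conn) (x : E → ℝ)
    (H : ∀ β : E → ℝ, IsBondElt G β → 2 * ip x β ≤ ip β β)
    (A : Set V) (hA : A.Nonempty) (hAc : Aᶜ.Nonempty) :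
    2 * ip x (bv G A) ≤ ∑ e, |bv G A e| := by
  obtain ⟨P, hPb, hPsum, hPval⟩ := L2a G hG A hA hAc
  have h1 : ip x (bv G A) = ∑ p ∈ P, ip x (bv G p.2) := by
    rw [hPsum, ip_sum_right]
  have h2 : ∀ p ∈ P, 2 * ip x (bv G p.2) ≤ ip (bv G p.2) (bv G p.2) :=
    fun p hp => H _ (hPb p hp)
  have h3 : ∑ p ∈ P, ip (bv G p.2) (bv G p.2) = ∑ e, |bv G A e| := by
    unfold ip
    rw [Finset.sum_comm]
    refine Finset.sum_congr rfl fun e _ => ?_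
    have hv : ∀ p ∈ P, bv G p.2 e * bv G p.2 e = bv G A e * bv G p.2 e := by
      intro p hp
      by_cases h : bv G p.2 e = 0
      · rw [h]; ring
      · rw [hPval p hp e h]
    rw [Finset.sum_congr rfl hv, ← Finset.mul_sum]
    have : ∑ p ∈ P, bv G p.2 e = bv G A e := by
      have := congrFun hPsum e
      rw [this]
      rw [Finset.sum_apply]
    rw [this, ← sq, bv_sq_eq_abs]
  calc 2 * ip x (bv G A) = ∑ p ∈ P, 2 * ip x (bv G p.2) := by
        rw [h1, Finset.mul_sum]
    _ ≤ ∑ p ∈ P, ip (bv G p.2) (bv G p.2) := Finset.sum_le_sum h2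
    _ = ∑ e, |bv G A e| := h3

/-- integer-potential version -/
lemma KG (hG : G.Conn) (x : E → ℝ)
    (H : ∀ β : E → ℝ, IsBondElt G β → 2 * ip x β ≤ ip β β)
    (g : V → ℤ) :
    2 * ip x (G.dm (fun v => (g v : ℝ))) ≤ ∑ e, |(G.dm (fun v => (g v : ℝ))) e| := by
  have hV : Nonempty V := hG.nonempty
  obtain ⟨v₀⟩ := hV
  set m : ℤ := Finset.univ.inf' ⟨v₀, Finset.mem_univ v₀⟩ g with hm
  have hmg : ∀ v, m ≤ g v := fun v => Finset.inf'_le _ (Finset.mem_univ v)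
  -- strong induction on the measure
  suffices h : ∀ N : ℕ, ∀ g : V → ℤ, (∀ v, m ≤ g v) →
      (∑ v, (g v - m).toNat) ≤ N →
      2 * ip x (G.dm (fun v => (g v : ℝ))) ≤ ∑ e, |(G.dm (fun v => (g v : ℝ))) e| by
    exact h _ g hmg le_rfl
  intro N
  induction N with
  | zero =>
      intro g hg hN
      have hconst : ∀ v, g v = m := by
        intro v
        have : (g v - m).toNat = 0 := by
          refine Nat.eq_zero_of_le_zero (le_trans ?_ hN)
          exact Finset.single_le_sum (f := fun w => (g w - m).toNat)
            (fun w _ => Nat.zero_le _) (Finset.mem_univ v)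
        have h2 := hg v
        omega
      have : G.dm (fun v => ((g v : ℝ))) = 0 := by
        have : (fun v => ((g v : ℝ))) = fun _ => (m : ℝ) := by
          funext v; rw [hconst v]
        rw [this, dm_const]
      rw [this]
      simp [ip]
  | succ N ih =>
      intro g hg hN
      by_cases hc : ∀ v w : V, g v = g w
      · have : G.dm (fun v => ((g v : ℝ))) = 0 := by
          have : (fun v => ((g v : ℝ))) = fun _ => (g v₀ : ℝ) := by
            funext v; rw [hc v v₀]
          rw [this, dm_const]
        rw [this]; simp [ip]
      · push_neg at hc
        obtain ⟨u₁, u₂, hu⟩ := hc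
        set M : ℤ := Finset.univ.sup' ⟨v₀, Finset.mem_univ v₀⟩ g with hM
        have hgM : ∀ v, g v ≤ M := fun v => Finset.le_sup' _ (Finset.mem_univ v)
        set A : Set V := {v | g v = M} with hA
        have hAne : A.Nonempty := by
          obtain ⟨w, _, hw⟩ := Finset.exists_mem_eq_sup' ⟨v₀, Finset.mem_univ v₀⟩ g
          exact ⟨w, hw.symm⟩
        have hexlt : ∃ u, g u < M := by
          rcases lt_or_gt_of_ne hu with h | h
          · exact ⟨u₁, lt_of_lt_of_le h (hgM u₂)⟩
          · exact ⟨u₂, lt_of_lt_of_le h (hgM u₁)⟩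
        have hAcne : Aᶜ.Nonempty := by
          obtain ⟨u, hu2⟩ := hexlt
          exact ⟨u, by simp [hA]; omega⟩
        set g' : V → ℤ := fun v => if v ∈ A then g v - 1 else g v with hg'
        have hMgtm : ∃ u, m ≤ g u ∧ g u < M := by
          obtain ⟨u, hu2⟩ := hexlt
          exact ⟨u, hg u, hu2⟩
        have hg'lb : ∀ v, m ≤ g' v := by
          intro v
          simp only [hg']
          split_ifs with h
          · obtain ⟨u, h1, h2⟩ := hMgtm
            have : g v = M := h
            omega
          · exact hg v
        -- decomposition of dm
        have hsplit : G.dm (fun v => ((g v : ℝ))) = G.dm (fun v => ((g' v : ℝ))) + bv G A := by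
          funext e
          simp only [Multigraph.dm, bv, cχ, Pi.add_apply, hg']
          by_cases h1 : G.head e ∈ A <;> by_cases h2 : G.tail e ∈ A <;>
            simp [h1, h2] <;> push_cast <;> ring
        -- per-edge absolute value identity
        have habs : ∀ e, |(G.dm (fun v => (g v : ℝ))) e| =
            |(G.dm (fun v => (g' v : ℝ))) e| + |bv G A e| := by
          intro e
          have hcast : ∀ a b : ℤ, a ≤ b → (a:ℝ) ≤ (b:ℝ) := fun a b h => Int.cast_le.2 h
          simp only [Multigraph.dm, bv, cχ, hg']
          by_cases h1 : G.head e ∈ A <;> by_cases h2 : G.tail e ∈ A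
          · simp only [if_pos h1, if_pos h2]
            push_cast
            rw [show ((g (G.head e):ℝ) - 1 - ((g (G.tail e)) - 1)) =
              (g (G.head e):ℝ) - (g (G.tail e)) from by ring]
            simp
          · simp only [if_pos h1, if_neg h2]
            have hh : g (G.head e) = M := h1
            have ht : g (G.tail e) < M := lt_of_le_of_ne (hgM _) h2
            have e1 : (g (G.tail e):ℝ) ≤ (g (G.head e):ℝ) - 1 := by
              have := hcast _ _ (show g (G.tail e) ≤ g (G.head e) - 1 by omega)
              push_cast at this; linarith
            push_cast
            rw [abs_of_nonneg (show (0:ℝ) ≤ (g (G.head e):ℝ) - (g (G.tail e)) from by linarith),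
              abs_of_nonneg (show (0:ℝ) ≤ (g (G.head e):ℝ) - 1 - (g (G.tail e)) from by linarith)]
            norm_num <;> linarith
          · simp only [if_neg h1, if_pos h2]
            have ht : g (G.tail e) = M := h2
            have hh : g (G.head e) < M := lt_of_le_of_ne (hgM _) h1
            have e1 : (g (G.head e):ℝ) ≤ (g (G.tail e):ℝ) - 1 := by
              have := hcast _ _ (show g (G.head e) ≤ g (G.tail e) - 1 by omega)
              push_cast at this; linarith
            push_cast
            rw [abs_of_nonpos (show ((g (G.head e):ℝ) - (g (G.tail e))) ≤ 0 from by linarith),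
              abs_of_nonpos (show ((g (G.head e):ℝ) - ((g (G.tail e):ℝ) - 1)) ≤ 0 from by linarith)]
            norm_num <;> linarith
          · simp only [if_neg h1, if_neg h2]
            simp
        -- measure decreases
        have hmeas : (∑ v, (g' v - m).toNat) ≤ N := by
          have hlt : (∑ v, (g' v - m).toNat) < ∑ v, (g v - m).toNat := by
            refine Finset.sum_lt_sum (fun v _ => ?_) ?_
            · simp only [hg']; split_ifs with h
              · omega
              · exact le_refl _
            · obtain ⟨a, ha⟩ := hAne
              refine ⟨a, Finset.mem_univ a, ?_⟩
              simp only [hg', if_pos ha]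
              have hMm : m < M := by
                obtain ⟨u, h1, h2⟩ := hMgtm; omega
              have : g a = M := ha
              omega
          omega
        have hIH := ih g' hg'lb hmeas
        have hKB := KB G hG x H A hAne hAcne
        calc 2 * ip x (G.dm (fun v => (g v : ℝ)))
            = 2 * ip x (G.dm (fun v => (g' v : ℝ))) + 2 * ip x (bv G A) := by
              rw [hsplit, ip_add_right]; ring
          _ ≤ (∑ e, |(G.dm (fun v => (g' v : ℝ))) e|) + ∑ e, |bv G A e| := by
              have h2 : 2 * ip x (bv G A) ≤ ∑ e, |bv G A e| := by
                refine le_trans hKB ?_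
                exact le_of_eq rfl
              linarith
          _ = ∑ e, |(G.dm (fun v => (g v : ℝ))) e| := by
              rw [← Finset.sum_add_distrib]
              exact (Finset.sum_congr rfl fun e _ => (habs e).symm)

/-- integers: |k| ≤ k² -/
lemma int_abs_le_sq (k : ℤ) : |(k:ℝ)| ≤ (k:ℝ) * (k:ℝ) := by
  rcases eq_or_ne k 0 with rfl | h
  · simp
  · have h1 : (1:ℤ) ≤ |k| := by
      have := abs_pos.mpr h
      omega
    have : |(k:ℝ)| * 1 ≤ |(k:ℝ)| * |(k:ℝ)| := by
      apply mul_le_mul_of_nonneg_left _ (abs_nonneg _)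
      · exact_mod_cast h1
    rw [mul_one] at this
    rw [← abs_mul_abs_self (k:ℝ)]
    exact this

/-- (C1): bond inequalities imply Voronoi membership -/
lemma vor_of_bond_ineqs (hG : G.Conn) (x : E → ℝ) (hx : x ∈ FR G)
    (H : ∀ β : E → ℝ, IsBondElt G β → 2 * ip x β ≤ ip β β) : x ∈ VorF G 0 := by
  rw [mem_Vor_iff]
  refine ⟨hx, fun α hα => ?_⟩
  obtain ⟨g, rfl⟩ := hα
  refine le_trans (KG G hG x H g) ?_
  unfold ip
  refine Finset.sum_le_sum fun e _ => ?_
  simp only [Multigraph.dm]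
  have : ((g (G.head e) : ℝ)) - (g (G.tail e) : ℝ) = (((g (G.head e) - g (G.tail e) : ℤ)) : ℝ) := by
    push_cast; ring
  rw [this]
  exact int_abs_le_sq _

end S17
end Chunk4
section Chunk5
variable {V E : Type} [Fintype V] [Fintype E] [DecidableEq V] [DecidableEq E]
namespace S17
variable (G : Multigraph V E)

/-- one directed step along the orientation -/
def dstep (D : Set (E × Bool)) (a b : V) : Prop :=
  ∃ oe ∈ D, G.otail oe = a ∧ G.ohead oe = b

/-- up-set w.r.t. the orientation -/
def UpSet (D : Set (E × Bool)) (A : Set V) : Prop :=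
  ∀ oe ∈ D, G.otail oe ∈ A → G.ohead oe ∈ A

def reachSet (D : Set (E × Bool)) (v : V) : Set V :=
  {u | Relation.ReflTransGen (dstep G D) v u}

lemma mem_reachSet_self (D : Set (E × Bool)) (v : V) : v ∈ reachSet G D v :=
  Relation.ReflTransGen.refl

lemma reachSet_upset (D : Set (E × Bool)) (v : V) : UpSet G D (reachSet G D v) := by
  intro oe hoe hin
  exact Relation.ReflTransGen.tail hin ⟨oe, hoe, rfl, rfl⟩

/-- no directed cycles: auxiliary indexed closed-walk version -/
lemma build_cycle {D : Set (E × Bool)}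
    (hD2 : ¬ ∃ (l : ℕ) (vs : Fin l → V) (es : Fin l → E × Bool), 0 < l ∧
      Function.Injective vs ∧
      ∀ i : Fin l, es i ∈ D ∧ G.otail (es i) = vs i ∧
        G.ohead (es i) = vs ⟨((i : ℕ) + 1) % l, Nat.mod_lt _ i.pos⟩) :
    ∀ n : ℕ, ∀ w : ℕ → V, (∀ i ≤ n, dstep G D (w i) (w ((i + 1) % (n + 1)))) → False := by
  intro n
  induction n using Nat.strong_induction_on with
  | _ n ih =>
    intro w hw
    by_cases hinj : Function.Injective (fun i : Fin (n+1) => w i)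
    · refine hD2 ⟨n+1, fun i : Fin (n+1) => w i, ?_, Nat.succ_pos n, hinj, ?_⟩
      · exact fun i => Classical.choose (hw i (Nat.lt_succ_iff.mp i.isLt))
      · intro i
        obtain ⟨hmem, hto, hho⟩ := Classical.choose_spec (hw i (Nat.lt_succ_iff.mp i.isLt))
        exact ⟨hmem, hto, hho⟩
    · -- duplicate vertices: shorten
      rw [Function.not_injective_iff] at hinj
      obtain ⟨i, j, heq, hne⟩ := hinj
      -- wlog i < j
      have main : ∀ i j : Fin (n+1), (i:ℕ) < (j:ℕ) → w i = w j → False := by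
        intro i j hij heq2
        have hjn : (j:ℕ) ≤ n := Nat.lt_succ_iff.mp j.isLt
        set n' : ℕ := (j:ℕ) - (i:ℕ) - 1 with hn'
        have hn'n : n' < n := by omega
        refine ih n' hn'n (fun t => w ((i:ℕ) + t)) ?_
        intro t ht
        show dstep G D (w ((i:ℕ) + t)) (w ((i:ℕ) + (t + 1) % (n' + 1)))
        by_cases hlast : t = n'
        · have h2 : (t + 1) % (n' + 1) = 0 := by rw [hlast]; exact Nat.mod_self _
          have h1 : (i:ℕ) + t = (j:ℕ) - 1 := by omega
          rw [h2]
          simp only [Nat.add_zero]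
          rw [h1, heq2]
          have h3 := hw ((j:ℕ) - 1) (by omega)
          have h4 : (((j:ℕ) - 1) + 1) % (n + 1) = (j:ℕ) := by
            have hj1 : ((j:ℕ) - 1) + 1 = (j:ℕ) := by omega
            rw [hj1]
            exact Nat.mod_eq_of_lt j.isLt
          rwa [h4] at h3
        · have htn : t < n' := lt_of_le_of_ne ht hlast
          rw [Nat.mod_eq_of_lt (by omega : t + 1 < n' + 1)]
          have h2 := hw ((i:ℕ) + t) (by omega)
          have h3 : (((i:ℕ) + t) + 1) % (n + 1) = (i:ℕ) + (t + 1) := by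
            rw [Nat.mod_eq_of_lt (by omega : ((i:ℕ) + t) + 1 < n + 1)]
            ring
          rw [h3] at h2
          exact h2
      rcases Nat.lt_or_ge (i:ℕ) (j:ℕ) with h | h
      · exact main i j h heq
      · have : (j:ℕ) < (i:ℕ) := by
          rcases Nat.lt_or_ge (j:ℕ) (i:ℕ) with h2 | h2
          · exact h2
          · exact absurd (Fin.ext (le_antisymm h2 h : (i:ℕ) = (j:ℕ))) hne
        exact main j i this heq.symm

/-- walks as indexed functions from ReflTransGen -/
lemma walk_of_reach {D : Set (E × Bool)} {b a : V}
    (h : Relation.ReflTransGen (dstep G D) b a) :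
    ∃ (n : ℕ) (w : ℕ → V), w 0 = b ∧ w n = a ∧ ∀ i < n, dstep G D (w i) (w (i + 1)) := by
  induction h with
  | refl => exact ⟨0, fun _ => b, rfl, rfl, fun i hi => absurd hi (Nat.not_lt_zero i)⟩
  | tail hxc hcd ihh =>
      rename_i c d
      obtain ⟨n, w, hw0, hwn, hws⟩ := ihh
      refine ⟨n + 1, fun i => if i = n + 1 then d else w i,
        by show (if (0:ℕ) = n + 1 then d else w 0) = b
           rw [if_neg (by omega : ¬ (0:ℕ) = n + 1)]; exact hw0,
        by show (if n + 1 = n + 1 then d else w (n + 1)) = d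
           rw [if_pos rfl], ?_⟩
      intro i hi
      show dstep G D (if i = n + 1 then d else w i) (if i + 1 = n + 1 then d else w (i + 1))
      rcases Nat.lt_or_ge i n with h2 | h2
      · rw [if_neg (by omega : ¬ i = n + 1), if_neg (by omega : ¬ i + 1 = n + 1)]
        exact hws i h2
      · have hieq : i = n := by omega
        subst hieq
        rw [if_neg (by omega : ¬ i = i + 1), if_pos rfl, hwn]
        exact hcd

/-- key: no return along an acyclic orientation -/
lemma no_return {D : Set (E × Bool)} (hD : IsAcyclicOrientation G D) {a b : V}
    (hab : dstep G D a b) (hba : Relation.ReflTransGen (dstep G D) b a) : False := by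
  obtain ⟨n, w, hw0, hwn, hws⟩ := walk_of_reach G hba
  refine build_cycle G hD.2 n w ?_
  intro i hi
  rcases Nat.lt_or_ge i n with h2 | h2
  · rw [Nat.mod_eq_of_lt (by omega)]
    exact hws i h2
  · have : i = n := by omega
    subst this
    rw [Nat.mod_self, hw0, hwn]
    exact hab

/-- dstep implies adjacency -/
lemma dstep_adj {D : Set (E × Bool)} {a b : V} (h : dstep G D a b) : G.adjG.Adj a b := by
  obtain ⟨⟨e, bo⟩, _, hto, hho⟩ := h
  cases bo
  · have h1 : G.head e = a := hto
    have h2 : G.tail e = b := hho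
    rw [← h1, ← h2]
    exact (adj_of_edge G e).symm
  · have h1 : G.tail e = a := hto
    have h2 : G.head e = b := hho
    rw [← h1, ← h2]
    exact adj_of_edge G e

/-- the reach set is connected -/
lemma reachSet_conn (D : Set (E × Bool)) (v : V) :
    ∀ y ∈ reachSet G D v, ∀ z ∈ reachSet G D v,
      Relation.ReflTransGen (rel G (reachSet G D v)) y z := by
  have key : ∀ u ∈ reachSet G D v, Relation.ReflTransGen (rel G (reachSet G D v)) v u := by
    intro u hu
    induction hu with
    | refl => exact Relation.ReflTransGen.refl
    | tail hab hbc ihh =>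
        rename_i b c
        exact Relation.ReflTransGen.tail ihh ⟨dstep_adj G hbc, hab,
          Relation.ReflTransGen.tail hab hbc⟩
  intro y hy z hz
  exact (letI : Std.Symm (rel G (reachSet G D v)) :=
    ⟨fun p q hpq => ⟨hpq.1.symm, hpq.2.2, hpq.2.1⟩⟩; Std.Symm.symm _ _ (key y hy)).trans (key z hz)

/-- reachSet minus base point is an up-set (needs acyclicity) -/
lemma reachSet_sdiff_upset {D : Set (E × Bool)} (hD : IsAcyclicOrientation G D) (v : V) :
    UpSet G D (reachSet G D v \ {v}) := by
  rintro oe hoe ⟨hin, hnv⟩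
  constructor
  · exact Relation.ReflTransGen.tail hin ⟨oe, hoe, rfl, rfl⟩
  · intro hv
    have heq : G.ohead oe = v := hv
    exact no_return G hD ⟨oe, hoe, rfl, heq⟩ hin

/-- positive support of an up-set bond vector is in D -/
lemma upset_suppPos {D : Set (E × Bool)} (hD : IsAcyclicOrientation G D) {A : Set V}
    (hA : UpSet G D A) {oe : E × Bool} (h : 0 < oval (bv G A) oe) : oe ∈ D := by
  have hval : oval (bv G A) oe = cχ A (G.ohead oe) - cχ A (G.otail oe) := oval_dm G (cχ A) oe
  have hin : G.ohead oe ∈ A ∧ G.otail oe ∉ A := by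
    by_cases h1 : G.ohead oe ∈ A <;> by_cases h2 : G.otail oe ∈ A <;>
      simp [cχ, h1, h2] at hval <;> first
        | exact ⟨h1, h2⟩
        | (exfalso; rw [hval] at h; norm_num at h)
  by_contra hoe
  rcases oe with ⟨e, b⟩
  have hmir : (e, !b) ∈ D := by
    cases b
    · simpa using (hD.1 e).2 (by simpa using hoe)
    · simp only [Bool.not_true]
      by_contra hh
      exact hoe ((hD.1 e).2 hh)
  have hto : G.otail (e, !b) = G.ohead (e, b) := by cases b <;> rfl
  have hho : G.ohead (e, !b) = G.otail (e, b) := by cases b <;> rfl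
  have := hA (e, !b) hmir (by rw [hto]; exact hin.1)
  rw [hho] at this
  exact hin.2 this

end S17
end Chunk5
section Chunk6
variable {V E : Type} [Fintype V] [Fintype E] [DecidableEq V] [DecidableEq E]
namespace S17

lemma ip_zero_right (x : E → ℝ) : ip x 0 = 0 := by simp [ip]

lemma ip_smul_right (c : ℝ) (x y : E → ℝ) : ip x (c • y) = c * ip x y := by
  rw [ip_comm, ip_smul_left, ip_comm]

lemma ip_eq_inner (x y : E → ℝ) :
    ip x y = inner ℝ ((WithLp.equiv 2 (E → ℝ)).symm x) ((WithLp.equiv 2 (E → ℝ)).symm y) := by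
  rw [PiLp.inner_apply]
  unfold ip
  refine Finset.sum_congr rfl fun e _ => ?_
  simp [WithLp.equiv_symm_apply, RCLike.inner_apply, mul_comm]

/-- orthogonal projection onto a submodule of `E → ℝ`, in `ip` terms -/
lemma proj_exists (T : Submodule ℝ (E → ℝ)) (w : E → ℝ) :
    ∃ ν ∈ T, ∀ z ∈ T, ip (w - ν) z = 0 := by
  classical
  set K : Submodule ℝ (EuclideanSpace ℝ E) :=
    T.comap (WithLp.linearEquiv 2 ℝ (E → ℝ)).toLinearMap with hK
  have : CompleteSpace K := FiniteDimensional.complete ℝ K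
  set wE : EuclideanSpace ℝ E := (WithLp.equiv 2 (E → ℝ)).symm w with hwE
  set p : EuclideanSpace ℝ E := ((K.orthogonalProjectionOnto wE : K) : EuclideanSpace ℝ E) with hp
  have hpK : p ∈ K := (K.orthogonalProjectionOnto wE).2
  refine ⟨WithLp.equiv 2 (E → ℝ) p, ?_, ?_⟩
  · rw [hK, Submodule.mem_comap] at hpK
    simpa using hpK
  · intro z hz
    have hzK : (WithLp.equiv 2 (E → ℝ)).symm z ∈ K := by
      rw [hK, Submodule.mem_comap]
      simpa using hz
    have horto := K.starProjection_inner_eq_zero wE ((WithLp.equiv 2 (E → ℝ)).symm z) hzK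
    rw [ip_eq_inner]
    have h1 : (WithLp.equiv 2 (E → ℝ)).symm (w - WithLp.equiv 2 (E → ℝ) p) = wE - p := by
      rw [WithLp.equiv_symm_apply, WithLp.toLp_sub, hwE]; rfl
    rw [h1]
    exact horto

/-- orthogonality criterion for submodule inclusion -/
lemma le_of_orth (S T : Submodule ℝ (E → ℝ)) (hST : S ≤ T)
    (h : ∀ z ∈ T, (∀ s ∈ S, ip z s = 0) → z = 0) : T ≤ S := by
  intro t ht
  obtain ⟨ν, hν, hall⟩ := proj_exists S t
  have hz : t - ν ∈ T := T.sub_mem ht (hST hν)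
  have : t - ν = 0 := h _ hz (fun s hs => hall s hs)
  have : t = ν := by
    have := congrArg (· + ν) this
    simpa using this
  rw [this]; exact hν

/-- orthogonality to generators extends to the span -/
lemma ip_zero_span {Gens : Set (E → ℝ)} {z : E → ℝ} (h : ∀ g ∈ Gens, ip z g = 0) :
    ∀ s ∈ Submodule.span ℝ Gens, ip z s = 0 := by
  intro s hs
  induction hs using Submodule.span_induction with
  | mem g hg => exact h g hg
  | zero => exact ip_zero_right z
  | add a b _ _ ha hb => rw [ip_add_right, ha, hb]; ring
  | smul c a _ ha => rw [ip_smul_right, ha]; ring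

end S17
end Chunk6
section Chunk7
variable {V E : Type} [Fintype V] [Fintype E] [DecidableEq V] [DecidableEq E]
namespace S17
variable (G : Multigraph V E)

/-- the ±1 vector of an orientation -/
noncomputable def oneD (D : Set (E × Bool)) : E → ℝ :=
  fun e => if (e, true) ∈ D then 1 else -1

lemma oval_eq_of {x y : E → ℝ} {e : E} (b : Bool) (h : x e = y e) :
    oval x (e, b) = oval y (e, b) := by
  cases b <;> simp [oval, h]

lemma oval_zero_of {x : E → ℝ} {e : E} (b : Bool) (h : x e = 0) :
    oval x (e, b) = 0 := by
  cases b <;> simp [oval, h]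

lemma ip_add_left (x y z : E → ℝ) : ip (x + y) z = ip x z + ip y z := by
  unfold ip; rw [← Finset.sum_add_distrib]; exact Finset.sum_congr rfl fun e _ => by
    simp [add_mul]

lemma ip_sub_right (x y z : E → ℝ) : ip x (y - z) = ip x y - ip x z := by
  rw [ip_comm, ip_sub_left, ip_comm y x, ip_comm z x]

/-- pairing of `oneD` with a compatible bond vector -/
lemma pairA {D : Set (E × Bool)} (hD1 : ∀ e : E, ((e, true) ∈ D ↔ (e, false) ∉ D))
    {C : Set V} (hsupp : suppPos (bv G C) ⊆ D) :
    ip (oneD D) (bv G C) = ip (bv G C) (bv G C) := by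
  unfold ip
  refine Finset.sum_congr rfl fun e _ => ?_
  rcases bv_vals G C e with h | h | h
  · rw [h]; ring
  · have : (e, true) ∈ D := hsupp (by simp [suppPos, oval, h] : (e, true) ∈ suppPos (bv G C))
    simp [oneD, this, h]
  · have hf : (e, false) ∈ D := hsupp (by simp [suppPos, oval, h] : (e, false) ∈ suppPos (bv G C))
    have ht : (e, true) ∉ D := fun h2 => ((hD1 e).1 h2) hf
    simp [oneD, ht, h]

/-- per-edge inequality for `oneD` -/
lemma pairA_le (D : Set (E × Bool)) (C : Set V) :
    ip (oneD D) (bv G C) ≤ ip (bv G C) (bv G C) := by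
  unfold ip
  refine Finset.sum_le_sum fun e _ => ?_
  rcases bv_vals G C e with h | h | h <;> rw [h] <;> unfold oneD <;> split_ifs <;> norm_num

/-- equality in the per-edge inequality forces orientation agreement -/
lemma pairA_eq_case {D : Set (E × Bool)} {C : Set V}
    (h : ip (oneD D) (bv G C) = ip (bv G C) (bv G C)) :
    ∀ e, bv G C e ≠ 0 → oneD D e = bv G C e := by
  intro e he
  have hsum : ∑ e, (bv G C e * bv G C e - oneD D e * bv G C e) = 0 := by
    unfold ip at h
    rw [Finset.sum_sub_distrib, h]; ring
  have hterm : ∀ e ∈ Finset.univ, 0 ≤ bv G C e * bv G C e - oneD D e * bv G C e := by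
    intro e _
    rcases bv_vals G C e with h1 | h1 | h1 <;> rw [h1] <;> unfold oneD <;> split_ifs <;> norm_num
  have := (Finset.sum_eq_zero_iff_of_nonneg hterm).1 hsum e (Finset.mem_univ e)
  rcases bv_vals G C e with h1 | h1 | h1
  · exact absurd h1 he
  · rw [h1] at this ⊢; unfold oneD at this ⊢; split_ifs at this ⊢ <;> norm_num at this <;> rfl
  · rw [h1] at this ⊢; unfold oneD at this ⊢; split_ifs at this ⊢ <;> norm_num at this <;> rfl

/-- main part 1 -/
theorem part1core (hG : G.Conn) (D : Set (E × Bool)) (hD : IsAcyclicOrientation G D) :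
    ∃ ν : E → ℝ, FD G D = {ν} ∧ ν ∈ VorF G 0 ∧ IsExposed ℝ (VorF G 0) {ν} ∧
      D = {oe : E × Bool | ∃ β : E → ℝ, IsBondElt G β ∧ ν ∈ Fhyp G β ∧ oe ∈ suppPos β} := by
  classical
  obtain ⟨ν, hνFR, hνorth⟩ := proj_exists (FRsub G) ((1/2 : ℝ) • oneD D)
  have hνFR' : ν ∈ FR G := hνFR
  have hpair : ∀ z ∈ FR G, ip ν z = (1/2) * ip (oneD D) z := by
    intro z hz
    have h0 := hνorth z hz
    rw [ip_sub_left] at h0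
    have h1 : ip ((1/2 : ℝ) • oneD D) z = (1/2) * ip (oneD D) z := ip_smul_left _ _ _
    linarith
  -- (1) ν ∈ FD G D
  have hνFD : ν ∈ FD G D := by
    refine ⟨hνFR', fun β hβ hsupp => ?_⟩
    obtain ⟨C, hC1, hC2, hC3, hC4⟩ := hβ
    have hβbv : β = bv G C := hC4
    rw [hβbv] at hsupp ⊢
    rw [mem_Fhyp_iff]
    refine ⟨hνFR', ?_⟩
    rw [hpair _ (bv_mem_FR G C), pairA G hD.1 hsupp]
    ring
  -- up-set pairing for elements of FD
  have hFDups : ∀ x ∈ FD G D, ∀ A : Set V, UpSet G D A →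
      ip x (bv G A) = (1/2) * ip (oneD D) (bv G A) ∨ bv G A = 0 := by
    intro x hx A hA
    by_cases hAe : A = ∅
    · right; rw [hAe]; exact bv_empty G
    by_cases hAu : A = Set.univ
    · right; rw [hAu]; exact bv_univ G
    left
    obtain ⟨P, hPb, hPsum, hPval⟩ := L2a G hG A
      (Set.nonempty_iff_ne_empty.2 hAe) (Set.nonempty_compl.2 hAu)
    have hsuppP : ∀ p ∈ P, suppPos (bv G p.2) ⊆ D := by
      rintro p hp ⟨e, b⟩ hoe
      have hoe' : 0 < oval (bv G p.2) (e, b) := hoe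
      have hne : bv G p.2 e ≠ 0 := by
        intro h0
        rw [oval_zero_of b h0] at hoe'
        norm_num at hoe'
      have hval := hPval p hp e hne
      have hovv : oval (bv G A) (e, b) = oval (bv G p.2) (e, b) := oval_eq_of b hval.symm
      exact upset_suppPos G hD hA (show 0 < oval (bv G A) (e, b) by rw [hovv]; exact hoe')
    have heq : ∀ p ∈ P, ip x (bv G p.2) = (1/2) * ip (oneD D) (bv G p.2) := by
      intro p hp
      have hx2 := hx.2 (bv G p.2) (hPb p hp) (hsuppP p hp)
      rw [mem_Fhyp_iff] at hx2
      have hν2 := hνFD.2 (bv G p.2) (hPb p hp) (hsuppP p hp)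
      rw [mem_Fhyp_iff] at hν2
      have hνp := hpair _ (bv_mem_FR G p.2)
      have e1 := hx2.2
      have e2 := hν2.2
      linarith
    rw [hPsum, ip_sum_right, ip_sum_right, Finset.mul_sum]
    exact Finset.sum_congr rfl heq
  -- orthogonality to up-set vectors for differences
  have hupz : ∀ x ∈ FD G D, ∀ A : Set V, UpSet G D A → ip (x - ν) (bv G A) = 0 := by
    intro x hx A hA
    by_cases h0 : bv G A = 0
    · rw [h0]; exact ip_zero_right _
    · have h1 := (hFDups x hx A hA).resolve_right h0
      have h2 := (hFDups ν hνFD A hA).resolve_right h0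
      rw [ip_sub_left, h1, h2]; ring
  -- (2) uniqueness
  have huniq : ∀ x ∈ FD G D, x = ν := by
    intro x hx
    have hsing : ∀ v : V, ip (x - ν) (bv G {v}) = 0 := by
      intro v
      have hup1 : UpSet G D (reachSet G D v) := reachSet_upset G D v
      have hup2 : UpSet G D (reachSet G D v \ {v}) := reachSet_sdiff_upset G hD v
      have hχ : cχ ({v} : Set V) = cχ (reachSet G D v) - cχ (reachSet G D v \ {v}) := by
        funext u
        show cχ {v} u = cχ (reachSet G D v) u - cχ (reachSet G D v \ {v}) u
        unfold cχ
        by_cases h1 : u = v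
        · subst h1
          rw [if_pos (Set.mem_singleton_iff.2 rfl), if_pos (mem_reachSet_self G D u),
            if_neg (fun hc : u ∈ reachSet G D u \ {u} => hc.2 rfl)]
          norm_num
        · simp only [Set.mem_singleton_iff, h1, if_neg h1, Set.mem_diff]
          by_cases h2 : u ∈ reachSet G D v <;> simp [h2, h1]
      have hbv : bv G {v} = bv G (reachSet G D v) - bv G (reachSet G D v \ {v}) := by
        unfold bv
        rw [hχ, dm_sub]
      rw [hbv, ip_sub_right, hupz x hx _ hup1, hupz x hx _ hup2]
      ring
    obtain ⟨h, hh⟩ := Submodule.sub_mem (FRsub G) (hx.1 : x ∈ FRsub G) hνFR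
    have hdecomp : x - ν = ∑ v, h v • bv G {v} := by
      rw [← hh]
      have hrw : h = ∑ v, h v • cχ ({v} : Set V) := by
        funext u
        rw [Finset.sum_apply]
        rw [Finset.sum_eq_single u]
        · simp [cχ]
        · intro v _ hvu
          simp [cχ, Ne.symm hvu]
        · intro hu
          exact absurd (Finset.mem_univ u) hu
      show dmL G h = _
      conv_lhs => rw [hrw]
      rw [map_sum]
      refine Finset.sum_congr rfl fun v _ => ?_
      rw [map_smul]
      rfl
    have hzz : ip (x - ν) (x - ν) = 0 := by
      nth_rewrite 2 [hdecomp]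
      rw [ip_sum_right]
      refine Finset.sum_eq_zero fun v _ => ?_
      rw [ip_smul_right, hsing v]
      ring
    have hz0 : x - ν = 0 := eq_zero_of_ip_self _ hzz
    exact sub_eq_zero.1 hz0
  -- (3) Voronoi membership
  have hνVor : ν ∈ VorF G 0 := by
    refine vor_of_bond_ineqs G hG ν hνFR' ?_
    intro β hβ
    obtain ⟨C, _, _, _, hC4⟩ := hβ
    rw [hC4]
    show 2 * ip ν (bv G C) ≤ ip (bv G C) (bv G C)
    rw [hpair _ (bv_mem_FR G C)]
    have := pairA_le G D C
    linarith
  -- (4) exposedness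
  set 𝒮 : Finset (Set V) := Finset.univ.filter
    (fun C : Set V => IsBondElt G (bv G C) ∧ suppPos (bv G C) ⊆ D) with h𝒮
  set σ : E → ℝ := ∑ C ∈ 𝒮, bv G C with hσ
  have hνC : ∀ C ∈ 𝒮, 2 * ip ν (bv G C) = ip (bv G C) (bv G C) := by
    intro C hC
    rw [h𝒮, Finset.mem_filter] at hC
    have := hνFD.2 (bv G C) hC.2.1 hC.2.2
    rw [mem_Fhyp_iff] at this
    exact this.2
  have hxC : ∀ x ∈ VorF G 0, ∀ C ∈ 𝒮, 2 * ip x (bv G C) ≤ ip (bv G C) (bv G C) := by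
    intro x hx C _
    rw [mem_Vor_iff] at hx
    exact hx.2 (bv G C) (bv_mem_FZr G C)
  have hℓmax : ∀ x ∈ VorF G 0, ip x σ ≤ ip ν σ := by
    intro x hx
    rw [hσ, ip_sum_right, ip_sum_right]
    refine Finset.sum_le_sum fun C hC => ?_
    have h1 := hxC x hx C hC
    have h2 := hνC C hC
    linarith
  have hℓeq : ∀ x ∈ VorF G 0, ip x σ = ip ν σ → x ∈ FD G D := by
    intro x hx hipeq
    have hsum0 : ∑ C ∈ 𝒮, (ip (bv G C) (bv G C) - 2 * ip x (bv G C)) = 0 := by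
      have e1 : ∑ C ∈ 𝒮, ip (bv G C) (bv G C) = ∑ C ∈ 𝒮, 2 * ip ν (bv G C) :=
        Finset.sum_congr rfl fun C hC => (hνC C hC).symm
      rw [Finset.sum_sub_distrib, e1, ← Finset.mul_sum, ← Finset.mul_sum,
        ← ip_sum_right, ← ip_sum_right, ← hσ, hipeq]
      ring
    have hall : ∀ C ∈ 𝒮, ip (bv G C) (bv G C) - 2 * ip x (bv G C) = 0 := by
      intro C hC
      refine (Finset.sum_eq_zero_iff_of_nonneg fun C hC => ?_).1 hsum0 C hC
      have := hxC x hx C hC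
      linarith
    refine ⟨(mem_Vor_iff G x).1 hx |>.1, fun β hβ hsupp => ?_⟩
    obtain ⟨C₀, hj1, hj2, hj3, hj4⟩ := hβ
    have hb2 : IsBondElt G (bv G C₀) := ⟨C₀, hj1, hj2, hj3, rfl⟩
    have hs2 : suppPos (bv G C₀) ⊆ D := by
      intro oe hoe
      exact hsupp (show oe ∈ suppPos β by rw [hj4]; exact hoe)
    have hC₀mem : C₀ ∈ 𝒮 := by
      rw [h𝒮, Finset.mem_filter]
      exact ⟨Finset.mem_univ _, hb2, hs2⟩
    rw [hj4]
    show x ∈ Fhyp G (bv G C₀)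
    rw [mem_Fhyp_iff]
    refine ⟨(mem_Vor_iff G x).1 hx |>.1, ?_⟩
    have := hall C₀ hC₀mem
    linarith
  let ℓlin : (E → ℝ) →ₗ[ℝ] ℝ := {
    toFun := fun x => ip x σ
    map_add' := fun a b => ip_add_left a b σ
    map_smul' := fun c a => by simpa using ip_smul_left c a σ }
  let ℓ : (E → ℝ) →L[ℝ] ℝ := LinearMap.toContinuousLinearMap ℓlin
  have hℓapp : ∀ y, ℓ y = ip y σ := fun y => rfl
  have hexp : IsExposed ℝ (VorF G 0) {ν} := by
    intro _
    refine ⟨ℓ, ?_⟩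
    ext x
    simp only [Set.mem_singleton_iff, Set.mem_setOf_eq]
    constructor
    · rintro rfl
      exact ⟨hνVor, fun y hy => by rw [hℓapp, hℓapp]; exact hℓmax y hy⟩
    · rintro ⟨hxV, hmax⟩
      have h1 : ip x σ = ip ν σ := by
        have h2 := hmax ν hνVor
        rw [hℓapp, hℓapp] at h2
        exact le_antisymm (hℓmax x hxV) h2
      exact huniq x (hℓeq x hxV h1)
  -- (5) φ(ν) = D
  have hphi : D = {oe : E × Bool | ∃ β : E → ℝ, IsBondElt G β ∧ ν ∈ Fhyp G β ∧ oe ∈ suppPos β} := by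
    apply Set.ext
    intro oe
    constructor
    · intro hoe
      set A : Set V := reachSet G D (G.ohead oe) with hA
      have hheadA : G.ohead oe ∈ A := mem_reachSet_self G D _
      have htailA : G.otail oe ∉ A := fun hta =>
        no_return G hD ⟨oe, hoe, rfl, rfl⟩ hta
      have hAne : A.Nonempty := ⟨_, hheadA⟩
      have hAconn := reachSet_conn G D (G.ohead oe)
      have htailAc : G.otail oe ∈ Aᶜ := htailA
      set K : Set V := cset G Aᶜ (G.otail oe) with hK
      have hKmem : K ∈ comps G Aᶜ := cset_mem_comps G htailAc
      have hbond : IsBondElt G (bv G Kᶜ) := stage2_bond G hG hAne hAconn hKmem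
      have hsupp : suppPos (bv G Kᶜ) ⊆ D := by
        rintro ⟨e, b⟩ hsp
        have hsp' : 0 < oval (bv G Kᶜ) (e, b) := hsp
        have hne : bv G Kᶜ e ≠ 0 := by
          intro h0
          rw [oval_zero_of b h0] at hsp'
          norm_num at hsp'
        have hval := stage2_cross G hKmem e hne
        have hovv : oval (bv G A) (e, b) = oval (bv G Kᶜ) (e, b) := oval_eq_of b hval.symm
        exact upset_suppPos G hD (reachSet_upset G D _)
          (show 0 < oval (bv G A) (e, b) by rw [hovv]; exact hsp')
      refine ⟨bv G Kᶜ, hbond, hνFD.2 _ hbond hsupp, ?_⟩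
      show 0 < oval (bv G Kᶜ) oe
      have hov : oval (bv G Kᶜ) oe = cχ Kᶜ (G.ohead oe) - cχ Kᶜ (G.otail oe) :=
        oval_dm G (cχ Kᶜ) oe
      have hh : G.ohead oe ∈ Kᶜ := fun hk => (comps_subset G hKmem hk) hheadA
      have ht2 : G.otail oe ∈ K := mem_cset_self G htailAc
      have ht3 : G.otail oe ∉ Kᶜ := fun hc => hc ht2
      rw [hov]
      simp [cχ, hh, ht3]
    · rintro ⟨β, hβ, hFhyp, hsp⟩
      obtain ⟨C, _, _, _, hC4⟩ := hβ
      rw [mem_Fhyp_iff] at hFhyp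
      have heq2 : 2 * ip ν (bv G C) = ip (bv G C) (bv G C) := by
        have h5 := hFhyp.2
        rw [hC4] at h5
        exact h5
      have hone : ip (oneD D) (bv G C) = ip (bv G C) (bv G C) := by
        have := hpair _ (bv_mem_FR G C)
        linarith
      have hkey := pairA_eq_case G hone
      rcases oe with ⟨e, b⟩
      have hspC : 0 < oval (bv G C) (e, b) := by
        have : 0 < oval β (e, b) := hsp
        rw [hC4] at this
        exact this
      cases b
      · have hlt : bv G C e < 0 := by
          have : 0 < -(bv G C e) := by simpa [oval] using hspC
          linarith
        have hm1 : bv G C e = -1 := by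
          rcases bv_vals G C e with h|h|h <;> rw [h] at hlt ⊢ <;> norm_num at hlt
        have h1 := hkey e (by rw [hm1]; norm_num)
        rw [hm1] at h1
        unfold oneD at h1
        split_ifs at h1 with hd
        · norm_num at h1
        · by_contra hf
          exact hd ((hD.1 e).2 hf)
      · have hgt : 0 < bv G C e := by simpa [oval] using hspC
        have hm1 : bv G C e = 1 := by
          rcases bv_vals G C e with h|h|h <;> rw [h] at hgt ⊢ <;> norm_num at hgt
        have h1 := hkey e (by rw [hm1]; norm_num)
        rw [hm1] at h1
        unfold oneD at h1
        split_ifs at h1 with hd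
        · exact hd
        · norm_num at h1
  refine ⟨ν, ?_, hνVor, hexp, hphi⟩
  apply Set.ext
  intro x
  simp only [Set.mem_singleton_iff]
  exact ⟨huniq x, fun hx => hx ▸ hνFD⟩

end S17
end Chunk7
section Chunk8
variable {V E : Type} [Fintype V] [Fintype E] [DecidableEq V] [DecidableEq E]
namespace S17
variable (G : Multigraph V E)

lemma oval_neg (x : E → ℝ) (e : E) (b : Bool) : oval x (e, !b) = - oval x (e, b) := by
  cases b <;> simp [oval]

lemma bv_union_inter (C C' : Set V) :
    bv G C + bv G C' = bv G (C ∪ C') + bv G (C ∩ C') := by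
  have hχ : cχ C + cχ C' = cχ (C ∪ C') + cχ (C ∩ C') := by
    funext u
    show cχ C u + cχ C' u = cχ (C ∪ C') u + cχ (C ∩ C') u
    unfold cχ
    by_cases h1 : u ∈ C <;> by_cases h2 : u ∈ C' <;>
      simp [Set.mem_union, Set.mem_inter_iff, h1, h2]
  unfold bv
  rw [← dm_add, ← dm_add, hχ]

lemma submod_edge (C C' : Set V) (e : E) :
    bv G (C ∪ C') e * bv G (C ∪ C') e + bv G (C ∩ C') e * bv G (C ∩ C') e ≤
      bv G C e * bv G C e + bv G C' e * bv G C' e := by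
  unfold bv Multigraph.dm cχ
  by_cases h1 : G.head e ∈ C <;> by_cases h2 : G.head e ∈ C' <;>
    by_cases h3 : G.tail e ∈ C <;> by_cases h4 : G.tail e ∈ C' <;>
    simp [Set.mem_union, Set.mem_inter_iff, h1, h2, h3, h4] <;> norm_num

lemma submod_edge_strict (C C' : Set V) (e : E)
    (hh : G.head e ∈ C) (hh' : G.head e ∉ C') (ht : G.tail e ∉ C) (ht' : G.tail e ∈ C') :
    bv G (C ∪ C') e * bv G (C ∪ C') e + bv G (C ∩ C') e * bv G (C ∩ C') e + 2 ≤
      bv G C e * bv G C e + bv G C' e * bv G C' e := by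
  unfold bv Multigraph.dm cχ
  simp [Set.mem_union, Set.mem_inter_iff, hh, hh', ht, ht'] <;> norm_num

/-- active hyperplanes cannot orient an edge both ways -/
lemma active_clash {ν : E → ℝ} (hν : ν ∈ VorF G 0) {C C' : Set V} {e : E}
    (hact : 2 * ip ν (bv G C) = ip (bv G C) (bv G C))
    (hact' : 2 * ip ν (bv G C') = ip (bv G C') (bv G C'))
    (hv1 : bv G C e = 1) (hv2 : bv G C' e = -1) : False := by
  have hineq : ∀ S : Set V, 2 * ip ν (bv G S) ≤ ip (bv G S) (bv G S) := by
    intro S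
    rw [mem_Vor_iff] at hν
    exact hν.2 (bv G S) (bv_mem_FZr G S)
  -- crossing structure
  have hh : G.head e ∈ C ∧ G.tail e ∉ C := (bv_eq_one_iff G C e).1 hv1
  have ht : G.head e ∉ C' ∧ G.tail e ∈ C' := (bv_eq_negone_iff G C' e).1 hv2
  -- strict submodularity
  have hsub : ip (bv G (C ∪ C')) (bv G (C ∪ C')) + ip (bv G (C ∩ C')) (bv G (C ∩ C')) + 2 ≤
      ip (bv G C) (bv G C) + ip (bv G C') (bv G C') := by
    unfold ip
    have hrest := fun e' (_ : e' ∈ Finset.univ.erase e) => submod_edge G C C' e'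
    have hsp := submod_edge_strict G C C' e hh.1 ht.1 hh.2 ht.2
    have h1 := Finset.sum_le_sum hrest
    have e2 : ∀ (f : E → ℝ), ∑ x ∈ Finset.univ.erase e, f x + f e = ∑ x, f x :=
      fun f => Finset.sum_erase_add _ _ (Finset.mem_univ e)
    calc (∑ e', bv G (C ∪ C') e' * bv G (C ∪ C') e') +
          (∑ e', bv G (C ∩ C') e' * bv G (C ∩ C') e') + 2
        = (∑ e' ∈ Finset.univ.erase e, (bv G (C ∪ C') e' * bv G (C ∪ C') e' +
            bv G (C ∩ C') e' * bv G (C ∩ C') e')) +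
          (bv G (C ∪ C') e * bv G (C ∪ C') e + bv G (C ∩ C') e * bv G (C ∩ C') e + 2) := by
          rw [Finset.sum_add_distrib]
          rw [← e2 (fun e' => bv G (C ∪ C') e' * bv G (C ∪ C') e'),
            ← e2 (fun e' => bv G (C ∩ C') e' * bv G (C ∩ C') e')]
          ring
      _ ≤ (∑ e' ∈ Finset.univ.erase e, (bv G C e' * bv G C e' + bv G C' e' * bv G C' e')) +
          (bv G C e * bv G C e + bv G C' e * bv G C' e) := by
          exact add_le_add h1 hsp
      _ = (∑ e', bv G C e' * bv G C e') + (∑ e', bv G C' e' * bv G C' e') := by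
          rw [Finset.sum_add_distrib]
          rw [← e2 (fun e' => bv G C e' * bv G C e'), ← e2 (fun e' => bv G C' e' * bv G C' e')]
          ring
  -- additivity
  have hadd : ip ν (bv G C) + ip ν (bv G C') = ip ν (bv G (C ∪ C')) + ip ν (bv G (C ∩ C')) := by
    rw [← ip_add_right, ← ip_add_right, bv_union_inter]
  have h3 := hineq (C ∪ C')
  have h4 := hineq (C ∩ C')
  linarith

end S17
end Chunk8
section Chunk9
variable {V E : Type} [Fintype V] [Fintype E] [DecidableEq V] [DecidableEq E]
namespace S17
variable (G : Multigraph V E)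

theorem part2core (hG : G.Conn) (ν : E → ℝ) (hν : ν ∈ VorF G 0)
    (hexp : IsExposed ℝ (VorF G 0) {ν}) :
    ∃ D : Set (E × Bool), IsAcyclicOrientation G D ∧ FD G D = {ν} := by
  classical
  obtain ⟨ℓ, hℓ⟩ := hexp ⟨ν, rfl⟩
  have hνmem : ν ∈ {x ∈ VorF G 0 | ∀ y ∈ VorF G 0, ℓ y ≤ ℓ x} := by
    rw [← hℓ]; rfl
  have hmaxν : ∀ y ∈ VorF G 0, ℓ y ≤ ℓ ν := hνmem.2
  have huniqmax : ∀ x ∈ VorF G 0, (∀ y ∈ VorF G 0, ℓ y ≤ ℓ x) → x = ν := by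
    intro x hx hmax
    have : x ∈ ({ν} : Set (E → ℝ)) := by rw [hℓ]; exact ⟨hx, hmax⟩
    exact this
  have hνFR : ν ∈ FRsub G := ((mem_Vor_iff G ν).1 hν).1
  have hbondineq : ∀ C : Set V, 2 * ip ν (bv G C) ≤ ip (bv G C) (bv G C) := by
    intro C
    exact ((mem_Vor_iff G ν).1 hν).2 (bv G C) (bv_mem_FZr G C)
  set 𝒜 : Finset (Set V) := Finset.univ.filter (fun C : Set V =>
    IsBondElt G (bv G C) ∧ 2 * ip ν (bv G C) = ip (bv G C) (bv G C)) with h𝒜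
  -- spanning property of active bond vectors
  have hspan : ∀ z ∈ FRsub G, (∀ C ∈ 𝒜, ip z (bv G C) = 0) → z = 0 := by
    intro z hzFR hzC
    by_contra hz0
    set Bn : Finset (Set V) := Finset.univ.filter (fun C : Set V =>
      IsBondElt G (bv G C) ∧ 2 * ip ν (bv G C) ≠ ip (bv G C) (bv G C)) with hBn
    set f : Set V → ℝ :=
      fun C => (ip (bv G C) (bv G C) - 2 * ip ν (bv G C)) / (2 * |ip z (bv G C)| + 1) with hf
    have hfpos : ∀ C ∈ Bn, 0 < f C := by
      intro C hC
      rw [hBn, Finset.mem_filter] at hC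
      have h1 := hbondineq C
      have h2 := hC.2.2
      have hnum : 0 < ip (bv G C) (bv G C) - 2 * ip ν (bv G C) := by
        rcases lt_or_eq_of_le h1 with h | h
        · linarith
        · exact absurd h h2
      have hden : 0 < 2 * |ip z (bv G C)| + 1 := by positivity
      exact div_pos hnum hden
    set ε : ℝ := if hBne : Bn.Nonempty then min 1 (Bn.inf' hBne f) else 1 with hε
    have hεpos : 0 < ε := by
      rw [hε]
      split_ifs with hBne
      · refine lt_min one_pos ?_
        obtain ⟨C, hC, hCeq⟩ := Finset.exists_mem_eq_inf' hBne f
        rw [hCeq]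
        exact hfpos C hC
      · exact one_pos
    have hεle : ∀ C ∈ Bn, ε * (2 * |ip z (bv G C)|) ≤
        ip (bv G C) (bv G C) - 2 * ip ν (bv G C) := by
      intro C hC
      have hεf : ε ≤ f C := by
        rw [hε]
        rw [dif_pos ⟨C, hC⟩]
        exact le_trans (min_le_right _ _) (Finset.inf'_le f hC)
      have hden : 0 < 2 * |ip z (bv G C)| + 1 := by positivity
      have h2 : f C * (2 * |ip z (bv G C)| + 1) = ip (bv G C) (bv G C) - 2 * ip ν (bv G C) := by
        rw [hf]
        field_simp
      have h3 : ε * (2 * |ip z (bv G C)|) ≤ f C * (2 * |ip z (bv G C)| + 1) := by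
        have hnn : (0:ℝ) ≤ 2 * |ip z (bv G C)| := by positivity
        nlinarith [hfpos C hC]
      linarith
    have hpert : ∀ s : ℝ, |s| ≤ ε → ν + s • z ∈ VorF G 0 := by
      intro s hs
      refine vor_of_bond_ineqs G hG _
        (Submodule.add_mem _ hνFR (Submodule.smul_mem _ s hzFR)) ?_
      intro β hβ
      obtain ⟨C, h1, h2, h3, h4⟩ := hβ
      rw [h4]
      show 2 * ip (ν + s • z) (bv G C) ≤ ip (bv G C) (bv G C)
      rw [ip_add_left, ip_smul_left]
      have hCbond : IsBondElt G (bv G C) := ⟨C, h1, h2, h3, rfl⟩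
      by_cases hact : 2 * ip ν (bv G C) = ip (bv G C) (bv G C)
      · have hz := hzC C (by rw [h𝒜, Finset.mem_filter]; exact ⟨Finset.mem_univ _, hCbond, hact⟩)
        rw [hz]
        rw [hact.symm]  -- ?
        ring_nf
        linarith [le_of_eq hact]
      · have hCBn : C ∈ Bn := by
          rw [hBn, Finset.mem_filter]; exact ⟨Finset.mem_univ _, hCbond, hact⟩
        have h5 := hεle C hCBn
        have h6 : s * ip z (bv G C) ≤ |s| * |ip z (bv G C)| := by
          calc s * ip z (bv G C) ≤ |s * ip z (bv G C)| := le_abs_self _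
            _ = |s| * |ip z (bv G C)| := abs_mul _ _
        have h7 : |s| * |ip z (bv G C)| ≤ ε * |ip z (bv G C)| :=
          mul_le_mul_of_nonneg_right hs (abs_nonneg _)
        linarith
    -- ℓ is killed on z, contradiction with exposedness
    have hp1 := hpert ε (by rw [abs_of_pos hεpos])
    have hp2 := hpert (-ε) (by rw [abs_neg, abs_of_pos hεpos])
    have e1 : ℓ (ν + ε • z) = ℓ ν + ε * ℓ z := by
      rw [map_add, map_smul]; simp
    have e2 : ℓ (ν + (-ε) • z) = ℓ ν - ε * ℓ z := by
      rw [map_add, map_smul]; simp; ring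
    have hz1 : ℓ z = 0 := by
      have l1 := hmaxν _ hp1
      have l2 := hmaxν _ hp2
      rw [e1] at l1
      rw [e2] at l2
      nlinarith [hεpos]
    have hfix : ν + ε • z = ν := by
      refine huniqmax _ hp1 ?_
      intro y hy
      rw [e1, hz1]
      simpa using hmaxν y hy
    have : ε • z = 0 := by
      have := congrArg (· - ν) hfix
      simpa using this
    have : z = 0 := by
      have := congrArg (fun t => ε⁻¹ • t) this
      simpa [smul_smul, inv_mul_cancel₀ (ne_of_gt hεpos)] using this
    exact hz0 this
  -- span submodule version
  set Ssub : Submodule ℝ (E → ℝ) := Submodule.span ℝ ((fun C => bv G C) '' ↑𝒜) with hSsub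
  have hSle : Ssub ≤ FRsub G := by
    rw [hSsub, Submodule.span_le]
    rintro _ ⟨C, _, rfl⟩
    exact bv_mem_FR G C
  have hTle : FRsub G ≤ Ssub := by
    refine le_of_orth Ssub (FRsub G) hSle ?_
    intro z hz hperp
    refine hspan z hz fun C hC => ?_
    exact hperp (bv G C) (Submodule.subset_span ⟨C, by simpa using hC, rfl⟩)
  -- the orientation
  set D₀ : Set (E × Bool) := {oe | ∃ C ∈ 𝒜, oe ∈ suppPos (bv G C)} with hD₀
  have hactive : ∀ C ∈ 𝒜, 2 * ip ν (bv G C) = ip (bv G C) (bv G C) := by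
    intro C hC
    rw [h𝒜, Finset.mem_filter] at hC
    exact hC.2.2
  have hone : ∀ e : E, ¬ ((e, true) ∈ D₀ ∧ (e, false) ∈ D₀) := by
    rintro e ⟨⟨C, hC, hsC⟩, ⟨C', hC', hsC'⟩⟩
    have hv1 : bv G C e = 1 := by
      have h0 : 0 < oval (bv G C) (e, true) := hsC
      have : 0 < bv G C e := by simpa [oval] using h0
      rcases bv_vals G C e with h|h|h <;> rw [h] at this ⊢ <;> norm_num at this
    have hv2 : bv G C' e = -1 := by
      have h0 : 0 < oval (bv G C') (e, false) := hsC'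
      have : bv G C' e < 0 := by
        have : 0 < -(bv G C' e) := by simpa [oval] using h0
        linarith
      rcases bv_vals G C' e with h|h|h <;> rw [h] at this ⊢ <;> norm_num at this
    exact active_clash G hν (hactive C hC) (hactive C' hC') hv1 hv2
  have hcov : ∀ e : E, (e, true) ∈ D₀ ∨ (e, false) ∈ D₀ := by
    intro e
    by_contra hcon
    push_neg at hcon
    have hz : ∀ C ∈ 𝒜, bv G C e = 0 := by
      intro C hC
      rcases bv_vals G C e with h|h|h
      · exact h
      · exact absurd (show (e, true) ∈ D₀ from
          ⟨C, hC, show 0 < oval (bv G C) (e, true) by simp [oval, h]⟩) hcon.1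
      · exact absurd (show (e, false) ∈ D₀ from
          ⟨C, hC, show 0 < oval (bv G C) (e, false) by simp [oval, h]⟩) hcon.2
    have hmem : bv G ({G.head e} : Set V) ∈ Ssub := hTle (bv_mem_FR G {G.head e})
    have hval0 : bv G ({G.head e} : Set V) e = 0 := by
      have hpred : ∀ x ∈ Ssub, x e = 0 := by
        intro x hx
        rw [hSsub] at hx
        induction hx using Submodule.span_induction with
        | mem g hg =>
            obtain ⟨C, hC, rfl⟩ := hg
            exact hz C (by simpa using hC)
        | zero => rfl
        | add a b _ _ ha hb => show a e + b e = 0; rw [ha, hb]; ring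
        | smul c a _ ha => show c * a e = 0; rw [ha]; ring
      exact hpred _ hmem
    have hval1 : bv G ({G.head e} : Set V) e = 1 := by
      refine (bv_eq_one_iff G _ e).2 ⟨rfl, ?_⟩
      intro h
      exact G.loopless e (h : G.tail e = G.head e)
    rw [hval0] at hval1
    norm_num at hval1
  -- acyclicity of D₀
  have hD₀acy : IsAcyclicOrientation G D₀ := by
    constructor
    · intro e
      constructor
      · intro ht hf
        exact hone e ⟨ht, hf⟩
      · intro hf
        rcases hcov e with h | h
        · exact h
        · exact absurd h hf
    · rintro ⟨l, vs, es, hl, hinj, hcyc⟩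
      obtain ⟨C, hC, hsp⟩ := (hcyc ⟨0, hl⟩).1
      -- telescoping
      have hσbij : Function.Bijective (fun i : Fin l =>
          (⟨((i : ℕ) + 1) % l, Nat.mod_lt _ i.pos⟩ : Fin l)) := by
        have hmod : ∀ k : ℕ, k < l → (k + 1) % l = if k + 1 = l then 0 else k + 1 := by
          intro k hk
          split_ifs with h
          · rw [h, Nat.mod_self]
          · exact Nat.mod_eq_of_lt (by omega)
        constructor
        · intro i j hij
          have h1 : ((i : ℕ) + 1) % l = ((j : ℕ) + 1) % l := by
            simpa using congrArg (fun t : Fin l => (t : ℕ)) hij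
          rw [hmod _ i.isLt, hmod _ j.isLt] at h1
          have := i.isLt
          have := j.isLt
          apply Fin.ext
          split_ifs at h1 <;> omega
        · intro j
          refine ⟨⟨(if (j : ℕ) = 0 then l - 1 else (j : ℕ) - 1), by
            have := j.isLt; split_ifs <;> omega⟩, ?_⟩
          apply Fin.ext
          show ((if (j : ℕ) = 0 then l - 1 else (j : ℕ) - 1) + 1) % l = (j : ℕ)
          have := j.isLt
          split_ifs with h
          · rw [show l - 1 + 1 = l by omega, Nat.mod_self, h]
          · rw [show (j : ℕ) - 1 + 1 = (j : ℕ) by omega]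
            exact Nat.mod_eq_of_lt this
      have hsum : ∑ i : Fin l, oval (bv G C) (es i) = 0 := by
        have hterm : ∀ i : Fin l, oval (bv G C) (es i) =
            cχ C (vs (⟨((i : ℕ) + 1) % l, Nat.mod_lt _ i.pos⟩ : Fin l)) - cχ C (vs i) := by
          intro i
          obtain ⟨_, hto, hho⟩ := hcyc i
          have h0 : oval (bv G C) (es i) = cχ C (G.ohead (es i)) - cχ C (G.otail (es i)) :=
            oval_dm G (cχ C) (es i)
          rw [h0, hto, hho]
        rw [Finset.sum_congr rfl (fun i _ => hterm i), Finset.sum_sub_distrib]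
        rw [Function.Bijective.sum_comp hσbij (fun j => cχ C (vs j))]
        ring
      have hpos0 : 0 < oval (bv G C) (es ⟨0, hl⟩) := hsp
      have hneg : ∃ j : Fin l, oval (bv G C) (es j) < 0 := by
        by_contra hno
        push_neg at hno
        have : 0 < ∑ i : Fin l, oval (bv G C) (es i) :=
          Finset.sum_pos' (fun i _ => hno i) ⟨⟨0, hl⟩, Finset.mem_univ _, hpos0⟩
        rw [hsum] at this
        norm_num at this
      obtain ⟨j, hj⟩ := hneg
      have hmir : ((es j).1, !(es j).2) ∈ D₀ := by
        refine ⟨C, hC, ?_⟩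
        show 0 < oval (bv G C) ((es j).1, !(es j).2)
        rw [oval_neg]
        have : oval (bv G C) ((es j).1, (es j).2) = oval (bv G C) (es j) := by
          rfl
        rw [this]
        linarith
      have hj2 : es j ∈ D₀ := (hcyc j).1
      have hj2' : ((es j).1, (es j).2) ∈ D₀ := hj2
      rcases Bool.dichotomy (es j).2 with hb | hb <;> rw [hb] at hj2' hmir <;>
        simp only [Bool.not_false, Bool.not_true] at hmir
      · exact hone (es j).1 ⟨hmir, hj2'⟩
      · exact hone (es j).1 ⟨hj2', hmir⟩
  -- conclude using part 1
  obtain ⟨ν', hFD', hνVor', hexp', hphi'⟩ := part1core G hG D₀ hD₀acy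
  have hν'FD : ν' ∈ FD G D₀ := by rw [hFD']; rfl
  have hν'ν : ν' = ν := by
    have hz : ∀ C ∈ 𝒜, ip (ν' - ν) (bv G C) = 0 := by
      intro C hC
      have hCbond : IsBondElt G (bv G C) := by
        rw [h𝒜, Finset.mem_filter] at hC
        exact hC.2.1
      have hsupp : suppPos (bv G C) ⊆ D₀ := fun oe hoe => ⟨C, hC, hoe⟩
      have h1 := hν'FD.2 (bv G C) hCbond hsupp
      rw [mem_Fhyp_iff] at h1
      have h2 := hactive C hC
      rw [ip_sub_left]
      have := h1.2
      linarith
    have : ν' - ν = 0 :=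
      hspan _ (Submodule.sub_mem _ (hν'FD.1 : ν' ∈ FRsub G) hνFR) hz
    exact sub_eq_zero.1 this
  refine ⟨D₀, hD₀acy, ?_⟩
  rw [hFD', hν'ν]

end S17
end Chunk9

theorem stmt17' {V E : Type} [Fintype V] [Fintype E] [DecidableEq V] [DecidableEq E]
    (G : Multigraph V E) (hG : G.Conn) :
    (∀ D : Set (E × Bool), IsAcyclicOrientation G D →
      ∃ ν : E → ℝ, FD G D = {ν} ∧ ν ∈ VorF G 0 ∧ IsExposed ℝ (VorF G 0) {ν} ∧
        D = {oe : E × Bool | ∃ β : E → ℝ, IsBondElt G β ∧ ν ∈ Fhyp G β ∧ oe ∈ suppPos β}) ∧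
    (∀ ν : E → ℝ, ν ∈ VorF G 0 → IsExposed ℝ (VorF G 0) {ν} →
      ∃ D : Set (E × Bool), IsAcyclicOrientation G D ∧ FD G D = {ν}) :=
  ⟨fun D hD => S17.part1core G hG D hD, fun ν hν hexp => S17.part2core G hG ν hν hexp⟩

/-- for an acyclic orientation `D` of `G`, the set `F_D` is a single
point `ν^D`, which is a vertex (`0`-dimensional face) of `Vor_F(O)` and satisfies
`φ(ν^D) = D`, i.e. `𝔼(D)` is the union of the positive supports of the bond elements
`β` with `ν^D ∈ F_β`; moreover every vertex of `Vor_F(O)` arises this way. -/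
theorem stmt17 (G : Multigraph V E) (hG : G.Conn) :
    (∀ D : Set (E × Bool), IsAcyclicOrientation G D →
      ∃ ν : E → ℝ, FD G D = {ν} ∧ ν ∈ VorF G 0 ∧ IsExposed ℝ (VorF G 0) {ν} ∧
        D = {oe : E × Bool | ∃ β : E → ℝ, IsBondElt G β ∧ ν ∈ Fhyp G β ∧ oe ∈ suppPos β}) ∧
    (∀ ν : E → ℝ, ν ∈ VorF G 0 → IsExposed ℝ (VorF G 0) {ν} →
      ∃ D : Set (E × Bool), IsAcyclicOrientation G D ∧ FD G D = {ν}) :=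
  ⟨fun D hD => S17.part1core G hG D hD, fun ν hν hexp => S17.part2core G hG ν hν hexp⟩
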